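/- arXiv:1812.03466 — 5 statements merged into one kernel-verified Lean document; each statement's English description precedes it below -/
import Mathlib

section
/- Hochschild's formula: Let B be a commutative ring of prime characteristic p, let D : B → B be a derivation, and let a ∈ B. Then the p-th iterate of the derivation aD (defined by (aD)(b) = a·D(b)) satisfies (aD)^p = a^p·D^p + ((aD)^{p−1}(a))·D, i.e., for every b ∈ B one has (aD)^p(b) = a^p·D^p(b) + ((aD)^{p−1}(a))·D(b). -/
open Finset MvPolynomial

section Raw
variable {B : Type*} [CommRing B] (D : B → B)

lemma raw_zero (hadd : ∀ x y : B, D (x + y) = D x + D y) : D 0 = 0 := by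
  have h := hadd 0 0
  simp only [add_zero] at h
  exact (left_eq_add.mp h)

lemma raw_one (hleib : ∀ x y : B, D (x * y) = x * D y + D x * y) : D 1 = 0 := by
  have h := hleib 1 1
  simp only [mul_one, one_mul] at h
  exact (left_eq_add.mp h)

lemma raw_natCast (hadd : ∀ x y : B, D (x + y) = D x + D y)
    (hleib : ∀ x y : B, D (x * y) = x * D y + D x * y) (n : ℕ) : D (n : B) = 0 := by
  induction n with
  | zero => simpa using raw_zero D hadd
  | succ n ih =>
    push_cast
    rw [hadd, ih, raw_one D hleib, add_zero]

lemma raw_sum (hadd : ∀ x y : B, D (x + y) = D x + D y) {ι : Type*} (s : Finset ι)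
    (g : ι → B) : D (∑ i ∈ s, g i) = ∑ i ∈ s, D (g i) := by
  classical
  induction s using Finset.induction_on with
  | empty => simpa using raw_zero D hadd
  | @insert _ _ hx ih => rw [Finset.sum_insert hx, Finset.sum_insert hx, hadd, ih]

lemma raw_iter_leibniz (hadd : ∀ x y : B, D (x + y) = D x + D y)
    (hleib : ∀ x y : B, D (x * y) = x * D y + D x * y) (n : ℕ) (x y : B) :
    D^[n] (x * y) = ∑ i ∈ range (n + 1), (n.choose i : B) * (D^[i] x * D^[n - i] y) := by
  induction n with
  | zero => simp
  | succ n ih =>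
    rw [Function.iterate_succ_apply', ih, raw_sum D hadd]
    have hterm : ∀ i ∈ range (n + 1),
        D ((n.choose i : B) * (D^[i] x * D^[n - i] y)) =
        (n.choose i : B) * (D^[i] x * D^[n + 1 - i] y)
          + (n.choose i : B) * (D^[i + 1] x * D^[n - i] y) := by
      intro i hi
      rw [mem_range] at hi
      rw [hleib, hleib, raw_natCast D hadd hleib, zero_mul, add_zero,
        ← Function.iterate_succ_apply' D i x, ← Function.iterate_succ_apply' D (n - i) y]
      simp only [Nat.succ_eq_add_one]
      have h1 : n - i + 1 = n + 1 - i := by omega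
      rw [h1]
      ring
    rw [Finset.sum_congr rfl hterm, Finset.sum_add_distrib]
    have key : ∑ i ∈ range (n + 1), (n.choose i : B) * (D^[i] x * D^[n + 1 - i] y)
        = (D^[0] x * D^[n + 1] y)
          + ∑ i ∈ range (n + 1), (n.choose (i + 1) : B) * (D^[i + 1] x * D^[n + 1 - (i+1)] y) := by
      have h2 : ∑ i ∈ range (n + 2), (n.choose i : B) * (D^[i] x * D^[n + 1 - i] y)
          = (∑ i ∈ range (n + 1), (n.choose (i + 1) : B) * (D^[i + 1] x * D^[n + 1 - (i+1)] y))
            + (n.choose 0 : B) * (D^[0] x * D^[n + 1 - 0] y) :=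
        Finset.sum_range_succ' _ (n + 1)
      rw [Finset.sum_range_succ, Nat.choose_succ_self, Nat.cast_zero, zero_mul, add_zero] at h2
      rw [h2]
      simp only [Nat.choose_zero_right, Nat.cast_one, one_mul, Nat.sub_zero]
      rw [add_comm]
    rw [key]
    have hgoal : ∑ i ∈ range (n + 2), ((n+1).choose i : B) * (D^[i] x * D^[n + 1 - i] y)
        = (∑ i ∈ range (n + 1), ((n+1).choose (i + 1) : B) * (D^[i + 1] x * D^[n + 1 - (i+1)] y))
          + ((n+1).choose 0 : B) * (D^[0] x * D^[n + 1 - 0] y) :=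
      Finset.sum_range_succ' _ (n + 1)
    rw [hgoal]
    simp only [Nat.choose_succ_succ', Nat.cast_add, Nat.choose_zero_right, Nat.cast_one, one_mul,
      Nat.sub_zero, add_mul]
    rw [Finset.sum_add_distrib]
    have h3 : ∀ i ∈ range (n+1), (n.choose i : B) * (D^[i + 1] x * D^[n - i] y)
        = (n.choose i : B) * (D^[i + 1] x * D^[n + 1 - (i + 1)] y) := by
      intro i hi
      have h4 : n - i = n + 1 - (i + 1) := by omega
      rw [h4]
    rw [Finset.sum_congr rfl h3]
    ring



lemma raw_pow_prime (p : ℕ) (hp : p.Prime) [CharP B p]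
    (hadd : ∀ x y : B, D (x + y) = D x + D y)
    (hleib : ∀ x y : B, D (x * y) = x * D y + D x * y) (x y : B) :
    D^[p] (x * y) = x * D^[p] y + D^[p] x * y := by
  rw [raw_iter_leibniz D hadd hleib]
  have hdecomp : range (p + 1) = insert 0 (insert p (Ioo 0 p)) := by
    ext i
    simp only [mem_range, mem_insert, mem_Ioo]
    have := hp.two_le
    omega
  have h0 : (0:ℕ) ∉ insert p (Ioo 0 p) := by
    simp only [mem_insert, mem_Ioo]
    have := hp.two_le
    omega
  have hP : p ∉ Ioo 0 p := by simp
  rw [hdecomp, Finset.sum_insert h0, Finset.sum_insert hP]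
  have hmid : ∑ i ∈ Ioo 0 p, (p.choose i : B) * (D^[i] x * D^[p - i] y) = 0 := by
    apply Finset.sum_eq_zero
    intro i hi
    rw [mem_Ioo] at hi
    have : (p.choose i : B) = 0 := by
      have hdvd : p ∣ p.choose i := hp.dvd_choose_self (by omega) hi.2
      exact (CharP.cast_eq_zero_iff B p _).mpr hdvd
    rw [this, zero_mul]
  rw [hmid, add_zero]
  simp only [Nat.choose_self, Nat.choose_zero_right, Nat.cast_one, one_mul,
    Function.iterate_zero_apply, Nat.sub_self, Nat.sub_zero]
end Raw

section Ext
open MvPolynomial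
variable {σ R B : Type*} [CommSemiring R] [CommRing B]

/-- Two "derivations along a ring hom φ" agreeing on constants and variables agree. -/
lemma derOver_ext (φ : MvPolynomial σ R →+* B) (h k : MvPolynomial σ R → B)
    (hadd : ∀ x y, h (x + y) = h x + h y) (kadd : ∀ x y, k (x + y) = k x + k y)
    (hleib : ∀ x y, h (x * y) = φ x * h y + h x * φ y)
    (kleib : ∀ x y, k (x * y) = φ x * k y + k x * φ y)
    (hC : ∀ r, h (C r) = k (C r)) (hX : ∀ i, h (X i) = k (X i)) (q : MvPolynomial σ R) :
    h q = k q := by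
  induction q using MvPolynomial.induction_on with
  | C r => exact hC r
  | add u v hu hv => rw [hadd, kadd, hu, hv]
  | mul_X u i hu => rw [hleib, kleib, hu, hX i]
end Ext

section Univ
variable (p : ℕ)

/-- shift derivation on `MvPolynomial ℕ (ZMod p)` -/
noncomputable def dx : Derivation (ZMod p) (MvPolynomial ℕ (ZMod p)) (MvPolynomial ℕ (ZMod p)) :=
  MvPolynomial.mkDerivation _ fun n => X (n + 1)

@[simp] lemma dx_X (n : ℕ) : dx p (X n) = X (n + 1) := MvPolynomial.mkDerivation_X _ _ _

/-- universal coefficients of Hochschild's expansion -/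
noncomputable def fc : ℕ → ℕ → MvPolynomial ℕ (ZMod p)
  | 0, 0 => 1
  | 0, _ + 1 => 0
  | n + 1, 0 => X 0 * dx p (fc n 0)
  | n + 1, k + 1 => X 0 * (dx p (fc n (k + 1)) + fc n k)

lemma fc_gt (n k : ℕ) (h : n < k) : fc p n k = 0 := by
  induction n generalizing k with
  | zero =>
    match k, h with
    | k + 1, _ => rfl
  | succ n ih =>
    match k, h with
    | k + 1, h =>
      rw [fc, ih (k+1) (by omega), ih k (by omega), map_zero, add_zero, mul_zero]

lemma fc_pos_zero (n : ℕ) (h : 1 ≤ n) : fc p n 0 = 0 := by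
  induction n with
  | zero => omega
  | succ n ih =>
    rw [fc]
    cases n with
    | zero => rw [show fc p 0 0 = 1 from rfl, Derivation.map_one_eq_zero, mul_zero]
    | succ m => rw [ih (by omega), map_zero, mul_zero]

lemma fc_diag (n : ℕ) : fc p n n = X 0 ^ n := by
  induction n with
  | zero => rfl
  | succ n ih =>
    rw [fc, fc_gt p n (n+1) (by omega), map_zero, zero_add, ih, pow_succ, mul_comm]

/-- key expansion lemma: `(aD)^[n] b = ∑ φ(fc n k) * D^[k] b` for any specialization φ. -/
lemma expansion {B : Type*} [CommRing B] (D : B → B)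
    (hadd : ∀ x y : B, D (x + y) = D x + D y)
    (hleib : ∀ x y : B, D (x * y) = x * D y + D x * y)
    (φ : MvPolynomial ℕ (ZMod p) →+* B)
    (hφd : ∀ q, φ (dx p q) = D (φ q)) (n : ℕ) (b : B) :
    (fun c => φ (X 0) * D c)^[n] b = ∑ k ∈ range (n + 1), φ (fc p n k) * D^[k] b := by
  induction n with
  | zero => simp [show fc p 0 0 = 1 from rfl]
  | succ n ih =>
    rw [Function.iterate_succ_apply', ih]
    show φ (X 0) * D (∑ k ∈ range (n + 1), φ (fc p n k) * D^[k] b) = _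
    rw [raw_sum D hadd]
    have hterm : ∀ k, D (φ (fc p n k) * D^[k] b)
        = φ (fc p n k) * D^[k+1] b + φ (dx p (fc p n k)) * D^[k] b := by
      intro k
      rw [hleib, hφd, Function.iterate_succ_apply']
    simp only [hterm]
    rw [Finset.sum_add_distrib, mul_add, Finset.mul_sum, Finset.mul_sum]
    -- RHS: ∑_{k ∈ range (n+2)} φ (fc (n+1) k) * D^[k] b
    have hrhs : ∑ k ∈ range (n + 2), φ (fc p (n+1) k) * D^[k] b
        = (∑ k ∈ range (n + 1), φ (fc p (n+1) (k+1)) * D^[k+1] b)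
          + φ (fc p (n+1) 0) * D^[0] b := Finset.sum_range_succ' _ (n+1)
    rw [hrhs]
    have h0 : φ (fc p (n+1) 0) * D^[0] b = φ (X 0) * (φ (dx p (fc p n 0)) * D^[0] b) := by
      rw [show fc p (n+1) 0 = X 0 * dx p (fc p n 0) from rfl, map_mul]
      ring
    have h1 : ∀ k ∈ range (n+1), φ (fc p (n+1) (k+1)) * D^[k+1] b
        = φ (X 0) * (φ (fc p n k) * D^[k+1] b)
          + φ (X 0) * (φ (dx p (fc p n (k+1))) * D^[k+1] b) := by
      intro k _
      rw [show fc p (n+1) (k+1) = X 0 * (dx p (fc p n (k+1)) + fc p n k) from rfl]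
      rw [map_mul, map_add]
      ring
    rw [Finset.sum_congr rfl h1, Finset.sum_add_distrib, h0]
    -- now both sides are sums; match up
    have h2 : ∑ k ∈ range (n+1), φ (X 0) * (φ (dx p (fc p n (k+1))) * D^[k+1] b)
        = ∑ k ∈ range (n+1), φ (X 0) * (φ (dx p (fc p n k)) * D^[k] b)
          - φ (X 0) * (φ (dx p (fc p n 0)) * D^[0] b) := by
      have h3 : ∑ k ∈ range (n+2), φ (X 0) * (φ (dx p (fc p n k)) * D^[k] b)
          = (∑ k ∈ range (n+1), φ (X 0) * (φ (dx p (fc p n (k+1))) * D^[k+1] b))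
            + φ (X 0) * (φ (dx p (fc p n 0)) * D^[0] b) := Finset.sum_range_succ' _ (n+1)
      have h4 : ∑ k ∈ range (n+2), φ (X 0) * (φ (dx p (fc p n k)) * D^[k] b)
          = (∑ k ∈ range (n+1), φ (X 0) * (φ (dx p (fc p n k)) * D^[k] b))
            + φ (X 0) * (φ (dx p (fc p n (n+1))) * D^[n+1] b) := Finset.sum_range_succ _ (n+1)
      rw [fc_gt p n (n+1) (by omega), map_zero, map_zero, zero_mul, mul_zero, add_zero] at h4
      rw [h4] at h3
      linear_combination -h3
    rw [h2]
    ring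
end Univ


section FcOne
variable (p : ℕ)
lemma fc_one {B : Type*} [CommRing B] (D : B → B)
    (hadd : ∀ x y : B, D (x + y) = D x + D y)
    (hleib : ∀ x y : B, D (x * y) = x * D y + D x * y)
    (φ : MvPolynomial ℕ (ZMod p) →+* B)
    (hφd : ∀ q, φ (dx p q) = D (φ q)) (n : ℕ) :
    φ (fc p (n + 1) 1) = (fun c => φ (X 0) * D c)^[n] (φ (X 0)) := by
  induction n with
  | zero =>
    rw [show fc p 1 1 = X 0 * (dx p (fc p 0 1) + fc p 0 0) from rfl,
      show fc p 0 1 = 0 from rfl, show fc p 0 0 = 1 from rfl, map_zero, zero_add, mul_one,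
      Function.iterate_zero_apply]
  | succ n ih =>
    rw [show fc p (n + 2) 1 = X 0 * (dx p (fc p (n + 1) 1) + fc p (n + 1) 0) from rfl,
      fc_pos_zero p (n + 1) (by omega), add_zero, map_mul, hφd, ih,
      Function.iterate_succ_apply']
end FcOne

section Vanish
variable (p : ℕ)

noncomputable def dA : Derivation (ZMod p) (MvPolynomial (Fin 3 × ℕ) (ZMod p))
    (MvPolynomial (Fin 3 × ℕ) (ZMod p)) :=
  MvPolynomial.mkDerivation _ fun v => X (v.1, v.2 + 1)

@[simp] lemma dA_X (v : Fin 3 × ℕ) : dA p (X v) = X (v.1, v.2 + 1) :=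
  MvPolynomial.mkDerivation_X _ _ _

noncomputable def φA : MvPolynomial ℕ (ZMod p) →+* MvPolynomial (Fin 3 × ℕ) (ZMod p) :=
  (aeval fun n => X ((0 : Fin 3), n)).toRingHom

@[simp] lemma φA_X (n : ℕ) : φA p (X n) = X ((0 : Fin 3), n) := by
  simp [φA]

lemma φA_dx (q : MvPolynomial ℕ (ZMod p)) : φA p (dx p q) = dA p (φA p q) := by
  apply derOver_ext (φA p) (fun q => φA p (dx p q)) (fun q => dA p (φA p q))
  · intro x y; rw [map_add, map_add]
  · intro x y; rw [map_add, map_add]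
  · intro x y
    rw [Derivation.leibniz, smul_eq_mul, smul_eq_mul, map_add, map_mul, map_mul]
    ring
  · intro x y
    rw [map_mul, Derivation.leibniz, smul_eq_mul, smul_eq_mul]
    ring
  · intro r
    rw [show (C r : MvPolynomial ℕ (ZMod p)) = algebraMap (ZMod p) _ r from rfl,
      Derivation.map_algebraMap, map_zero]
    have : φA p (algebraMap (ZMod p) _ r) = algebraMap (ZMod p) _ r := by
      simp [φA]
    rw [this, Derivation.map_algebraMap]
  · intro i
    rw [dx_X, φA_X, φA_X, dA_X]

lemma dA_iter (j : Fin 3) (m k : ℕ) : (⇑(dA p))^[k] (X (j, m)) = X (j, m + k) := by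
  induction k with
  | zero => rfl
  | succ k ih =>
    rw [Function.iterate_succ_apply', ih, dA_X]
    rfl

noncomputable def ψh (k0 : ℕ) :
    MvPolynomial (Fin 3 × ℕ) (ZMod p) →+* MvPolynomial ℕ (ZMod p) :=
  (aeval fun v : Fin 3 × ℕ =>
    if v.1 = 0 then X v.2
    else if v.1 = 1 then (if v.2 = 1 then 1 else 0)
    else (if v.2 = k0 - 1 then (1 : MvPolynomial ℕ (ZMod p)) else 0)).toRingHom

@[simp] lemma ψh_X (k0 : ℕ) (v : Fin 3 × ℕ) :
    ψh p k0 (X v) = if v.1 = 0 then X v.2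
      else if v.1 = 1 then (if v.2 = 1 then 1 else 0)
      else (if v.2 = k0 - 1 then 1 else 0) := by
  simp [ψh]

lemma ψh_φA (k0 : ℕ) (q : MvPolynomial ℕ (ZMod p)) : ψh p k0 (φA p q) = q := by
  have h : (ψh p k0).comp (φA p) = RingHom.id _ := by
    apply MvPolynomial.ringHom_ext
    · intro r
      simp [ψh, φA]
    · intro n
      rw [RingHom.comp_apply, φA_X, ψh_X]
      simp
  calc ψh p k0 (φA p q) = (ψh p k0).comp (φA p) q := rfl
    _ = q := by rw [h]; rfl

theorem fc_vanish (hp : p.Prime) (k0 : ℕ) (hk1 : 1 < k0) (hk2 : k0 < p) :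
    fc p p k0 = 0 := by
  haveI := Fact.mk hp
  have hp2 := hp.two_le
  set A := MvPolynomial (Fin 3 × ℕ) (ZMod p) with hA
  let DA : A → A := ⇑(dA p)
  have hadd : ∀ x y : A, DA (x + y) = DA x + DA y := fun x y => map_add _ _ _
  have hleib : ∀ x y : A, DA (x * y) = x * DA y + DA x * y := by
    intro x y
    show dA p (x * y) = x * dA p y + dA p x * y
    rw [Derivation.leibniz, smul_eq_mul, smul_eq_mul]
    ring
  let a' : A := X ((0 : Fin 3), 0)
  let E : A → A := fun c => a' * DA c
  have hEadd : ∀ x y : A, E (x + y) = E x + E y := by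
    intro x y; show a' * DA (x + y) = a' * DA x + a' * DA y; rw [hadd]; ring
  have hEleib : ∀ x y : A, E (x * y) = x * E y + E x * y := by
    intro x y; show a' * DA (x * y) = x * (a' * DA y) + a' * DA x * y; rw [hleib]; ring
  have hφX : φA p (X 0) = a' := φA_X p 0
  have hexp : ∀ b : A, E^[p] b = ∑ k ∈ range (p + 1), φA p (fc p p k) * DA^[k] b := by
    intro b
    have h := expansion p DA hadd hleib (φA p) (φA_dx p) p b
    rw [hφX] at h
    exact h
  let S : Finset ℕ := Finset.Ioo 1 p
  have hdecomp : range (p + 1) = insert 0 (insert 1 (insert p S)) := by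
    ext i
    simp only [mem_range, mem_insert, mem_Ioo, S]
    omega
  have h0m : (0 : ℕ) ∉ insert 1 (insert p S) := by
    simp only [mem_insert, mem_Ioo, S]; omega
  have h1m : (1 : ℕ) ∉ insert p S := by
    simp only [mem_insert, mem_Ioo, S]; omega
  have hpm : p ∉ S := by simp [S]
  have hsumS : ∀ b : A, ∑ k ∈ S, φA p (fc p p k) * DA^[k] b
      = E^[p] b - φA p (fc p p 1) * DA b - φA p (fc p p p) * DA^[p] b := by
    intro b
    have h := hexp b
    rw [hdecomp, Finset.sum_insert h0m, Finset.sum_insert h1m, Finset.sum_insert hpm,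
      fc_pos_zero p p (by omega), map_zero, zero_mul, zero_add, Function.iterate_one] at h
    linear_combination -h
  have hEp : ∀ x y : A, E^[p] (x * y) = x * E^[p] y + E^[p] x * y :=
    raw_pow_prime E p hp hEadd hEleib
  have hDp : ∀ x y : A, DA^[p] (x * y) = x * DA^[p] y + DA^[p] x * y :=
    raw_pow_prime DA p hp hadd hleib
  let u : A := X ((1 : Fin 3), 0)
  let v : A := X ((2 : Fin 3), 0)
  have hid : ∑ k ∈ S, φA p (fc p p k) * DA^[k] (u * v)
      = u * (∑ k ∈ S, φA p (fc p p k) * DA^[k] v)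
        + (∑ k ∈ S, φA p (fc p p k) * DA^[k] u) * v := by
    rw [hsumS, hsumS, hsumS, hEp, hDp, hleib]
    ring
  -- apply ψ
  let ψ := ψh p k0
  have hψid := congrArg (⇑ψ) hid
  rw [map_sum, map_add, map_mul, map_mul, map_sum, map_sum] at hψid
  -- compute the images
  have hψu : ∀ k : ℕ, ψ (DA^[k] u) = if k = 1 then 1 else 0 := by
    intro k
    show ψ ((⇑(dA p))^[k] (X (1, 0))) = _
    rw [dA_iter, ψh_X]
    simp only [Prod.fst, Prod.snd, zero_add]
    rw [if_neg (by decide), if_pos (by decide)]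
  have hψv : ∀ k : ℕ, ψ (DA^[k] v) = if k = k0 - 1 then 1 else 0 := by
    intro k
    show ψ ((⇑(dA p))^[k] (X (2, 0))) = _
    rw [dA_iter, ψh_X]
    simp only [Prod.fst, Prod.snd, zero_add]
    rw [if_neg (by decide), if_neg (by decide)]
  have hψuv : ∀ k ∈ S, ψ (DA^[k] (u * v))
      = if k = k0 then ((k0 : ℕ) : MvPolynomial ℕ (ZMod p)) else 0 := by
    intro k hk
    rw [mem_Ioo] at hk
    rw [raw_iter_leibniz DA hadd hleib k u v, map_sum]
    have hterm : ∀ i ∈ range (k + 1), ψ ((k.choose i : A) * (DA^[i] u * DA^[k - i] v))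
        = (k.choose i : MvPolynomial ℕ (ZMod p))
          * ((if i = 1 then 1 else 0) * (if k - i = k0 - 1 then 1 else 0)) := by
      intro i _
      rw [map_mul, map_mul, map_natCast, hψu, hψv]
    rw [Finset.sum_congr rfl hterm]
    by_cases hkk : k = k0
    · subst hkk
      rw [Finset.sum_eq_single_of_mem 1 (mem_range.mpr (by omega))]
      · simp
      · intro i _ hi
        rw [if_neg hi, zero_mul, mul_zero]
    · rw [if_neg hkk]
      apply Finset.sum_eq_zero
      intro i _
      by_cases hi : i = 1
      · have hne : k - i ≠ k0 - 1 := by omega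
        rw [if_neg hne, mul_zero, mul_zero]
      · rw [if_neg hi, zero_mul, mul_zero]
  have hψc : ∀ k : ℕ, ψ (φA p (fc p p k)) = fc p p k := fun k => ψh_φA p k0 _
  -- LHS
  have hL : ∑ k ∈ S, ψ (φA p (fc p p k) * DA^[k] (u * v))
      = fc p p k0 * ((k0 : ℕ) : MvPolynomial ℕ (ZMod p)) := by
    rw [Finset.sum_eq_single_of_mem k0 (mem_Ioo.mpr ⟨hk1, hk2⟩)]
    · rw [map_mul, hψc, hψuv k0 (mem_Ioo.mpr ⟨hk1, hk2⟩), if_pos rfl]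
    · intro k hk hne
      rw [map_mul, hψc, hψuv k hk, if_neg hne, mul_zero]
  -- RHS pieces
  have hψu0 : ψ u = 0 := by
    show ψ (X ((1 : Fin 3), 0)) = 0
    rw [ψh_X]
    simp only [Prod.fst, Prod.snd]
    rw [if_neg (by decide), if_pos (by decide), if_neg (by decide)]
  have hψv0 : ψ v = 0 := by
    show ψ (X ((2 : Fin 3), 0)) = 0
    rw [ψh_X]
    simp only [Prod.fst, Prod.snd]
    rw [if_neg (by decide), if_neg (by decide), if_neg (by omega)]
  rw [hL, hψu0, hψv0, zero_mul, mul_zero, add_zero] at hψid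
  -- conclude
  have hk0 : ((k0 : ℕ) : ZMod p) ≠ 0 := by
    rw [Ne, ZMod.natCast_eq_zero_iff]
    intro hdvd
    have := Nat.le_of_dvd (by omega) hdvd
    omega
  have hcast : ((k0 : ℕ) : MvPolynomial ℕ (ZMod p)) = C ((k0 : ℕ) : ZMod p) := by
    rw [map_natCast]
  calc fc p p k0
      = C ((k0 : ZMod p)⁻¹) * (fc p p k0 * ((k0 : ℕ) : MvPolynomial ℕ (ZMod p))) := by
        rw [hcast, mul_comm (fc p p k0), ← mul_assoc, ← C_mul, inv_mul_cancel₀ hk0, C_1, one_mul]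
    _ = 0 := by rw [hψid, mul_zero]
end Vanish


/-- **Hochschild's formula.** If `B` is a commutative ring of prime characteristic `p`,
`D : B → B` is a derivation (additive and satisfying the Leibniz rule) and `a ∈ B`, then
`(aD)^p = a^p · D^p + ((aD)^{p-1}(a)) · D`. -/
theorem hochschild_formula {B : Type*} [CommRing B] (p : ℕ) (hp : p.Prime) [CharP B p]
    (D : B → B) (hadd : ∀ x y : B, D (x + y) = D x + D y)
    (hleib : ∀ x y : B, D (x * y) = x * D y + D x * y) (a : B) (b : B) :
    (fun c => a * D c)^[p] b = a ^ p * D^[p] b + ((fun c => a * D c)^[p - 1] a) * D b := by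
  haveI := Fact.mk hp
  have hp2 := hp.two_le
  let φ : MvPolynomial ℕ (ZMod p) →+* B :=
    eval₂Hom (ZMod.castHom dvd_rfl B) (fun n => D^[n] a)
  have hφX : ∀ n, φ (X n) = D^[n] a := fun n => eval₂Hom_X' _ _ _
  have hφd : ∀ q, φ (dx p q) = D (φ q) := by
    apply derOver_ext φ (fun q => φ (dx p q)) (fun q => D (φ q))
    · intro x y; rw [map_add, map_add]
    · intro x y; rw [map_add, hadd]
    · intro x y
      rw [Derivation.leibniz, smul_eq_mul, smul_eq_mul, map_add, map_mul, map_mul]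
      ring
    · intro x y; rw [map_mul, hleib]
    · intro r
      rw [show (C r : MvPolynomial ℕ (ZMod p)) = algebraMap (ZMod p) _ r from rfl,
        Derivation.map_algebraMap, map_zero]
      have hφC : φ (algebraMap (ZMod p) _ r) = ((r.val : ℕ) : B) := by
        rw [show (algebraMap (ZMod p) (MvPolynomial ℕ (ZMod p)) r) = C r from rfl]
        rw [show φ (C r) = ZMod.castHom dvd_rfl B r from eval₂Hom_C _ _ _]
        rw [ZMod.castHom_apply, ← ZMod.natCast_val]
      rw [hφC, raw_natCast D hadd hleib]
    · intro i
      show φ (dx p (X i)) = D (φ (X i))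
      rw [dx_X, hφX, hφX, Function.iterate_succ_apply']
  have ha : φ (X 0) = a := by rw [hφX 0, Function.iterate_zero_apply]
  have h := expansion p D hadd hleib φ hφd p b
  rw [ha] at h
  rw [h]
  have hdecomp : range (p + 1) = insert 0 (insert 1 (insert p (Ioo 1 p))) := by
    ext i
    simp only [mem_range, mem_insert, mem_Ioo]
    omega
  have h0m : (0 : ℕ) ∉ insert 1 (insert p (Ioo 1 p)) := by
    simp only [mem_insert, mem_Ioo]; omega
  have h1m : (1 : ℕ) ∉ insert p (Ioo 1 p) := by
    simp only [mem_insert, mem_Ioo]; omega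
  have hpm : p ∉ Ioo 1 p := by simp
  rw [hdecomp, Finset.sum_insert h0m, Finset.sum_insert h1m, Finset.sum_insert hpm,
    fc_pos_zero p p (by omega), map_zero, zero_mul, zero_add]
  have hmid : ∑ k ∈ Ioo 1 p, φ (fc p p k) * D^[k] b = 0 := by
    apply Finset.sum_eq_zero
    intro k hk
    rw [mem_Ioo] at hk
    rw [fc_vanish p hp k hk.1 hk.2, map_zero, zero_mul]
  rw [hmid, add_zero, fc_diag, map_pow, ha]
  have h1 : φ (fc p p 1) = (fun c => a * D c)^[p - 1] a := by
    have h2 := fc_one p D hadd hleib φ hφd (p - 1)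
    rw [ha, show p - 1 + 1 = p from by omega] at h2
    exact h2
  rw [h1, Function.iterate_one]
  ring
end

section
/- Let B be an integral domain of prime characteristic p with fraction field K, and let D be a derivation of K that is p-closed, i.e., D^p = h·D for some h ∈ K. Then for every a ∈ K the derivation aD is also p-closed: there exists g ∈ K with (aD)^p = g·(aD); explicitly, for a ≠ 0 one may take g = a^{p−1}·h + a^{−1}·(aD)^{p−1}(a). -/
section Generic
variable {A : Type*} [CommRing A] (d : A → A)

theorem d_zero' (hadd : ∀ x y : A, d (x + y) = d x + d y) : d 0 = 0 := by
  have := hadd 0 0; simpa using this.symm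

theorem d_one' (hleib : ∀ x y : A, d (x * y) = x * d y + d x * y) : d 1 = 0 := by
  have := hleib 1 1; simpa using this

theorem d_sum' (hadd : ∀ x y : A, d (x + y) = d x + d y)
    {ι : Type*} (s : Finset ι) (f : ι → A) :
    d (∑ i ∈ s, f i) = ∑ i ∈ s, d (f i) := by
  classical
  induction s using Finset.induction with
  | empty => simpa using d_zero' d hadd
  | insert _ _ h ih => rw [Finset.sum_insert h, Finset.sum_insert h, hadd, ih]

theorem d_natCast (hadd : ∀ x y : A, d (x + y) = d x + d y)
    (hleib : ∀ x y : A, d (x * y) = x * d y + d x * y) (m : ℕ) :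
    d (m : A) = 0 := by
  induction m with
  | zero => simpa using d_zero' d hadd
  | succ m ihm => push_cast; rw [hadd]; simpa [ihm] using d_one' d hleib

/-- Iterated Leibniz rule. -/
theorem leibniz_iterate (hadd : ∀ x y : A, d (x + y) = d x + d y)
    (hleib : ∀ x y : A, d (x * y) = x * d y + d x * y) (n : ℕ) (x y : A) :
    d^[n] (x * y) = ∑ j ∈ Finset.range (n + 1),
      (n.choose j : A) * (d^[j] x * d^[n - j] y) := by
  induction n generalizing x y with
  | zero => simp
  | succ n ih =>
    rw [Function.iterate_succ_apply', ih, d_sum' d hadd]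
    have hterm : ∀ j ∈ Finset.range (n+1),
        d ((n.choose j : A) * (d^[j] x * d^[n - j] y)) =
        (n.choose j : A) * (d^[j+1] x * d^[n-j] y)
          + (n.choose j : A) * (d^[j] x * d^[n-j+1] y) := by
      intro j hj
      rw [hleib, hleib, d_natCast d hadd hleib]
      simp only [Function.iterate_succ_apply']
      ring
    rw [Finset.sum_congr rfl hterm, Finset.sum_add_distrib]
    have h1 : ∑ j ∈ Finset.range (n+1), (n.choose j : A) * (d^[j+1] x * d^[n-j] y)
        = ∑ j ∈ Finset.range (n+2),
            ((if j = 0 then (0:ℕ) else n.choose (j-1)) : A) * (d^[j] x * d^[n+1-j] y) := by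
      rw [Finset.sum_range_succ' _ (n+1)]
      simp only [if_neg (Nat.succ_ne_zero _), Nat.add_sub_cancel, eq_self_iff_true, if_true,
        Nat.cast_zero, zero_mul, add_zero, Function.iterate_zero, id_eq, Nat.sub_zero]
      apply Finset.sum_congr rfl
      intro j hj
      simp only [Finset.mem_range] at hj
      have hnj : n + 1 - (j + 1) = n - j := by omega
      rw [hnj]
    have h2 : ∑ j ∈ Finset.range (n+1), (n.choose j : A) * (d^[j] x * d^[n-j+1] y)
        = ∑ j ∈ Finset.range (n+2), (n.choose j : A) * (d^[j] x * d^[n+1-j] y) := by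
      rw [Finset.sum_range_succ _ (n+1)]
      rw [Nat.choose_succ_self, Nat.cast_zero, zero_mul, add_zero]
      apply Finset.sum_congr rfl
      intro j hj
      simp only [Finset.mem_range] at hj
      have hnj : n - j + 1 = n + 1 - j := by omega
      rw [hnj]
    rw [h1, h2, ← Finset.sum_add_distrib]
    apply Finset.sum_congr rfl
    intro j hj
    rcases j with _ | j
    · simp
    · rw [if_neg (Nat.succ_ne_zero _), Nat.succ_sub_one, Nat.choose_succ_succ' (n) (j)]
      push_cast
      ring
end Generic

section SumFormula
variable {A : Type*} [CommRing A] (d : A → A) (a : A) (G : ℕ → ℕ → A)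

theorem G_eq_zero_of_lt
    (hadd : ∀ x y : A, d (x + y) = d x + d y)
    (hG0S : ∀ k, G 0 (k+1) = 0)
    (hGrec0 : ∀ n, G (n+1) 0 = a * d (G n 0))
    (hGrecS : ∀ n k, G (n+1) (k+1) = a * d (G n (k+1)) + a * G n k) :
    ∀ n k, n < k → G n k = 0 := by
  intro n
  induction n with
  | zero => intro k hk; rcases k with _ | j; · omega
            exact hG0S j
  | succ n ih =>
    intro k hk
    rcases k with _ | j
    · omega
    · rw [hGrecS, ih (j+1) (by omega), ih j (by omega), d_zero' d hadd]
      ring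

theorem sumFormula
    (hadd : ∀ x y : A, d (x + y) = d x + d y)
    (hleib : ∀ x y : A, d (x * y) = x * d y + d x * y)
    (hG00 : G 0 0 = 1) (hG0S : ∀ k, G 0 (k+1) = 0)
    (hGrec0 : ∀ n, G (n+1) 0 = a * d (G n 0))
    (hGrecS : ∀ n k, G (n+1) (k+1) = a * d (G n (k+1)) + a * G n k)
    (n : ℕ) (x : A) :
    (fun c => a * d c)^[n] x = ∑ k ∈ Finset.range (n+1), G n k * d^[k] x := by
  induction n with
  | zero => simp [hG00]
  | succ n ih =>
    rw [Function.iterate_succ_apply']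
    show a * d ((fun c => a * d c)^[n] x) = _
    rw [ih, d_sum' d hadd, Finset.mul_sum]
    have hterm : ∀ k ∈ Finset.range (n+1),
        a * d (G n k * d^[k] x) =
        a * d (G n k) * d^[k] x + a * (G n k * d^[k+1] x) := by
      intro k hk
      rw [hleib]
      rw [Function.iterate_succ_apply']
      ring
    rw [Finset.sum_congr rfl hterm, Finset.sum_add_distrib]
    have h1 : ∑ k ∈ Finset.range (n+1), a * d (G n k) * d^[k] x
        = ∑ k ∈ Finset.range (n+2), a * d (G n k) * d^[k] x := by
      rw [Finset.sum_range_succ _ (n+1),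
        G_eq_zero_of_lt d a G hadd hG0S hGrec0 hGrecS n (n+1) (by omega),
        d_zero' d hadd]
      ring
    have h2 : ∑ k ∈ Finset.range (n+1), a * (G n k * d^[k+1] x)
        = ∑ k ∈ Finset.range (n+2),
            (if k = 0 then 0 else a * G n (k-1)) * d^[k] x := by
      rw [Finset.sum_range_succ' _ (n+1)]
      simp only [if_neg (Nat.succ_ne_zero _), Nat.add_sub_cancel, eq_self_iff_true, if_true,
        zero_mul, add_zero]
      apply Finset.sum_congr rfl
      intro k hk
      ring
    rw [h1, h2, ← Finset.sum_add_distrib]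
    apply Finset.sum_congr rfl
    intro k hk
    rcases k with _ | j
    · rw [if_pos rfl, hGrec0]; ring
    · rw [if_neg (Nat.succ_ne_zero _), Nat.succ_sub_one, hGrecS]; ring
end SumFormula

noncomputable section Universal
open MvPolynomial

variable (p : ℕ)

abbrev RR := MvPolynomial ℕ (ZMod p)

def dd : Derivation (ZMod p) (RR p) (RR p) :=
  MvPolynomial.mkDerivation _ (fun i => X (i+1))

theorem dd_X (i : ℕ) : dd p (X i) = X (i+1) := MvPolynomial.mkDerivation_X _ _ _

theorem dd_add (x y : RR p) : dd p (x + y) = dd p x + dd p y := map_add _ _ _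

theorem dd_mul (x y : RR p) : dd p (x * y) = x * dd p y + dd p x * y := by
  rw [Derivation.leibniz, smul_eq_mul, smul_eq_mul]; ring

def FF : ℕ → ℕ → RR p
  | 0, 0 => 1
  | 0, _+1 => 0
  | n+1, 0 => X 0 * dd p (FF n 0)
  | n+1, k+1 => X 0 * dd p (FF n (k+1)) + X 0 * FF n k

theorem FF_zero_right : ∀ n, 1 ≤ n → FF p n 0 = 0 := by
  intro n
  induction n with
  | zero => omega
  | succ n ih =>
    intro _
    show X 0 * dd p (FF p n 0) = 0
    rcases Nat.eq_zero_or_pos n with h | h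
    · subst h; show X 0 * dd p 1 = 0; simp
    · rw [ih h]; simp

theorem FF_diag : ∀ n, FF p n n = X 0 ^ n := by
  intro n
  induction n with
  | zero => rfl
  | succ n ih =>
    show X 0 * dd p (FF p n (n+1)) + X 0 * FF p n n = _
    rw [G_eq_zero_of_lt (fun c => dd p c) (X 0) (FF p) (dd_add p)
      (fun k => rfl) (fun n => rfl) (fun n k => rfl) n (n+1) (by omega), ih]
    simp [pow_succ]; ring

theorem FF_one : ∀ n, FF p (n+1) 1 = (fun c => X 0 * dd p c)^[n] (X 0) := by
  intro n
  induction n with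
  | zero =>
    show X 0 * dd p (FF p 0 1) + X 0 * FF p 0 0 = X 0
    show X 0 * dd p 0 + X 0 * 1 = X 0
    simp
  | succ n ih =>
    show X 0 * dd p (FF p (n+1) 1) + X 0 * FF p (n+1) 0 = _
    rw [FF_zero_right p (n+1) (by omega), ih, Function.iterate_succ_apply']
    simp

theorem FF_expand (n : ℕ) (x : RR p) :
    (fun c => X 0 * dd p c)^[n] x
      = ∑ k ∈ Finset.range (n+1), FF p n k * (fun c => dd p c)^[k] x :=
  sumFormula (fun c => dd p c) (X 0) (FF p) (dd_add p) (dd_mul p)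
    rfl (fun k => rfl) (fun n => rfl) (fun n k => rfl) n x

theorem dd_iterate_X (k i : ℕ) : (fun c => dd p c)^[k] (X i) = X (i + k) := by
  induction k generalizing i with
  | zero => simp
  | succ k ih =>
    rw [Function.iterate_succ_apply]
    show (fun c => dd p c)^[k] (dd p (X i)) = _
    rw [dd_X, ih]
    congr 1
    omega

end Universal

noncomputable section Universal2
open MvPolynomial

variable (p : ℕ)

/-- Polynomials in the variables `X 0, ..., X n`. -/
def VV (n : ℕ) : Subalgebra (ZMod p) (RR p) :=
  Algebra.adjoin (ZMod p) {f | ∃ i ≤ n, f = X i}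

theorem VV_mono {m n : ℕ} (h : m ≤ n) : VV p m ≤ VV p n := by
  apply Algebra.adjoin_mono
  rintro f ⟨i, hi, rfl⟩
  exact ⟨i, le_trans hi h, rfl⟩

theorem dd_mem_VV {n : ℕ} {f : RR p} (hf : f ∈ VV p n) : dd p f ∈ VV p (n+1) := by
  induction hf using Algebra.adjoin_induction with
  | mem x hx =>
    obtain ⟨i, hi, rfl⟩ := hx
    rw [dd_X]
    exact Algebra.subset_adjoin ⟨i+1, by omega, rfl⟩
  | algebraMap r => simpa using zero_mem (VV p (n+1))
  | add x y hx hy ihx ihy => rw [dd_add]; exact add_mem ihx ihy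
  | mul x y hx hy ihx ihy =>
    rw [dd_mul]
    exact add_mem (mul_mem (VV_mono p (by omega) hx) ihy)
      (mul_mem ihx (VV_mono p (by omega) hy))

theorem FF_mem_VV : ∀ n k, FF p n k ∈ VV p n := by
  intro n
  induction n with
  | zero =>
    intro k
    rcases k with _ | j
    · exact one_mem _
    · exact zero_mem _
  | succ n ih =>
    have hX0 : (X 0 : RR p) ∈ VV p (n+1) :=
      Algebra.subset_adjoin ⟨0, by omega, rfl⟩
    intro k
    rcases k with _ | j
    · exact mul_mem hX0 (dd_mem_VV p (ih 0))
    · exact add_mem (mul_mem hX0 (dd_mem_VV p (ih (j+1))))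
        (mul_mem hX0 (VV_mono p (by omega) (ih j)))

theorem algHom_fix_VV (ψ : RR p →ₐ[ZMod p] RR p) {n : ℕ}
    (hψ : ∀ i ≤ n, ψ (X i) = X i) {f : RR p} (hf : f ∈ VV p n) : ψ f = f := by
  induction hf using Algebra.adjoin_induction with
  | mem x hx => obtain ⟨i, hi, rfl⟩ := hx; exact hψ i hi
  | algebraMap r => simp
  | add x y hx hy ihx ihy => rw [map_add, ihx, ihy]
  | mul x y hx hy ihx ihy => rw [map_mul, ihx, ihy]

end Universal2

noncomputable section Universal3
open MvPolynomial

variable (p k₀ : ℕ)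

/-- The test evaluation: fixes small variables, sends `X (p+2) ↦ 1`,
`X (2p+3+(k₀-1)) ↦ 1`, all other large variables to `0`. -/
def gg : ℕ → RR p := fun i =>
  if i < p + 1 then X i
  else if i = p + 2 then 1
  else if i = 2*p + 3 + (k₀ - 1) then 1 else 0

theorem gg_small {i : ℕ} (hi : i ≤ p) : gg p k₀ i = X i := if_pos (by omega)

theorem gg_m (h2 : 2 ≤ k₀) : gg p k₀ (p+1) = 0 := by
  unfold gg
  rw [if_neg (by omega), if_neg (by omega), if_neg (by omega)]

theorem gg_m' (h2 : 2 ≤ k₀) : gg p k₀ (2*p+3) = 0 := by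
  unfold gg
  rw [if_neg (by omega), if_neg (by omega), if_neg (by omega)]

theorem gg_mj (h2 : 2 ≤ k₀) {j : ℕ} (hj : j ≤ p) :
    gg p k₀ ((p+1) + j) = if j = 1 then 1 else 0 := by
  unfold gg
  rcases eq_or_ne j 1 with rfl | hne
  · rw [if_neg (by omega), if_pos (by omega), if_pos rfl]
  · rw [if_neg (by omega), if_neg (by omega), if_neg (by omega), if_neg hne]

theorem gg_m'j (h2 : 2 ≤ k₀) (hk : k₀ < p) {t : ℕ} (ht : t ≤ p) :
    gg p k₀ ((2*p+3) + t) = if t = k₀ - 1 then 1 else 0 := by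
  unfold gg
  rcases eq_or_ne t (k₀ - 1) with rfl | hne
  · rw [if_neg (by omega), if_neg (by omega), if_pos rfl, if_pos rfl]
  · rw [if_neg (by omega), if_neg (by omega), if_neg (by omega), if_neg hne]

end Universal3
noncomputable section Universal4
open MvPolynomial

theorem FF_middle (p : ℕ) (hp : p.Prime) {k₀ : ℕ} (h2 : 2 ≤ k₀) (hk : k₀ < p) :
    FF p p k₀ = 0 := by
  haveI : Fact p.Prime := ⟨hp⟩
  have hE_add : ∀ x y : RR p, X 0 * dd p (x + y) = X 0 * dd p x + X 0 * dd p y := by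
    intro x y; rw [dd_add]; ring
  have hE_leib : ∀ x y : RR p,
      X 0 * dd p (x * y) = x * (X 0 * dd p y) + (X 0 * dd p x) * y := by
    intro x y; rw [dd_mul]; ring
  have hcast0 : ∀ j, 0 < j → j < p → ((p.choose j : ℕ) : RR p) = 0 := by
    intro j h0 hjp
    have hdvd : p ∣ p.choose j := hp.dvd_choose_self (by omega) hjp
    obtain ⟨c, hc⟩ := hdvd
    rw [hc]
    push_cast
    rw [CharP.cast_eq_zero (RR p) p]
    ring
  -- `E₀^[p]` satisfies the Leibniz rule
  have hder : ∀ x y : RR p,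
      (fun c => X 0 * dd p c)^[p] (x * y)
        = x * (fun c => X 0 * dd p c)^[p] y + (fun c => X 0 * dd p c)^[p] x * y := by
    intro x y
    rw [leibniz_iterate _ hE_add hE_leib p x y]
    have hterm : ∀ j ∈ Finset.range (p+1),
        (p.choose j : RR p) * ((fun c => X 0 * dd p c)^[j] x
            * (fun c => X 0 * dd p c)^[p-j] y)
        = (if j = 0 then x * (fun c => X 0 * dd p c)^[p] y else 0)
          + (if j = p then (fun c => X 0 * dd p c)^[p] x * y else 0) := by
      intro j hj
      simp only [Finset.mem_range] at hj
      rcases eq_or_ne j 0 with rfl | hj0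
      · rw [if_pos rfl, if_neg (show ¬0 = p by omega)]
        simp
      rcases eq_or_ne j p with rfl | hjp
      · rw [if_neg hj0, if_pos rfl]
        simp
      · rw [if_neg hj0, if_neg hjp, hcast0 j (by omega) (by omega)]
        ring
    rw [Finset.sum_congr rfl hterm, Finset.sum_add_distrib,
      Finset.sum_ite_eq' (Finset.range (p+1)) 0, Finset.sum_ite_eq' (Finset.range (p+1)) p]
    rw [if_pos (Finset.mem_range.2 (by omega)), if_pos (Finset.mem_range.2 (by omega))]
  -- instantiate at two fresh variables and expand
  have EQ := hder (X (p+1)) (X (2*p+3))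
  rw [FF_expand p p (X (p+1) * X (2*p+3)), FF_expand p p (X (p+1)),
    FF_expand p p (X (2*p+3))] at EQ
  have hinner : ∀ k ∈ Finset.range (p+1),
      FF p p k * (fun c => dd p c)^[k] (X (p+1) * X (2*p+3))
      = FF p p k * ∑ j ∈ Finset.range (k+1),
          (k.choose j : RR p) * (X ((p+1)+j) * X ((2*p+3)+(k-j))) := by
    intro k hk'
    rw [leibniz_iterate _ (dd_add p) (dd_mul p) k]
    refine congrArg (fun s => FF p p k * s) ?_
    apply Finset.sum_congr rfl
    intro j hj
    rw [dd_iterate_X, dd_iterate_X]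
  rw [Finset.sum_congr rfl hinner] at EQ
  -- apply the evaluation homomorphism
  have EQ2 := congrArg (aeval (R := ZMod p) (gg p k₀)) EQ
  simp only [map_add, map_mul, map_sum, map_natCast, aeval_X] at EQ2
  -- the fixed part
  have hfix : ∀ k ∈ Finset.range (p+1),
      aeval (R := ZMod p) (gg p k₀) (FF p p k) = FF p p k := by
    intro k hk'
    exact algHom_fix_VV p _ (fun i hi => by rw [aeval_X, gg_small p k₀ hi]) (FF_mem_VV p p k)
  rw [gg_m p k₀ h2, gg_m' p k₀ h2] at EQ2
  simp only [zero_mul, mul_zero, add_zero, zero_add] at EQ2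
  have hterm2 : ∀ k ∈ Finset.range (p+1),
      (aeval (R := ZMod p) (gg p k₀) (FF p p k))
        * ∑ j ∈ Finset.range (k+1),
            (k.choose j : RR p) * (gg p k₀ ((p+1)+j) * gg p k₀ ((2*p+3)+(k-j)))
      = if k = k₀ then (k₀ : RR p) * FF p p k₀ else 0 := by
    intro k hk'
    simp only [Finset.mem_range] at hk'
    rw [hfix k (Finset.mem_range.2 hk')]
    have hj' : ∀ j ∈ Finset.range (k+1),
        (k.choose j : RR p) * (gg p k₀ ((p+1)+j) * gg p k₀ ((2*p+3)+(k-j)))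
        = (k.choose j : RR p) * ((if j = 1 then 1 else 0) * (if k - j = k₀ - 1 then 1 else 0)) := by
      intro j hj
      simp only [Finset.mem_range] at hj
      rw [gg_mj p k₀ h2 (by omega), gg_m'j p k₀ h2 hk (by omega)]
    rw [Finset.sum_congr rfl hj']
    rcases eq_or_ne k k₀ with rfl | hne
    · rw [if_pos rfl, Finset.sum_eq_single_of_mem 1 (Finset.mem_range.2 (by omega))]
      · rw [if_pos rfl, if_pos rfl, Nat.choose_one_right]
        ring
      · intro j hj hne1
        rw [if_neg hne1]
        ring
    · rw [if_neg hne, Finset.sum_eq_zero, mul_zero]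
      intro j hj
      simp only [Finset.mem_range] at hj
      rcases eq_or_ne j 1 with rfl | hne1
      · rw [if_neg (show ¬ k - 1 = k₀ - 1 by omega)]
        ring
      · rw [if_neg hne1]
        ring
  rw [Finset.sum_congr rfl hterm2, Finset.sum_ite_eq' (Finset.range (p+1)) k₀,
    if_pos (Finset.mem_range.2 (by omega))] at EQ2
  rcases mul_eq_zero.1 EQ2 with hcon | hok
  · exfalso
    rw [← map_natCast (C : ZMod p →+* RR p) k₀, MvPolynomial.C_eq_zero,
      ZMod.natCast_eq_zero_iff] at hcon
    have := Nat.le_of_dvd (by omega) hcon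
    omega
  · exact hok
end Universal4
noncomputable section Transfer
open MvPolynomial

variable {K : Type*} [Field K] (p : ℕ) [CharP K p]
  (D : K → K) (a : K)

/-- The evaluation homomorphism sending `X i` to `D^[i] a`. -/
def phiK : RR p →+* K :=
  eval₂Hom (ZMod.castHom (dvd_refl p) K) (fun i => D^[i] a)

theorem phiK_X (i : ℕ) : phiK p D a (X i) = D^[i] a := by
  simp [phiK]

theorem phiK_dd [NeZero p] (hadd : ∀ x y : K, D (x + y) = D x + D y)
    (hleib : ∀ x y : K, D (x * y) = x * D y + D x * y)
    (f : RR p) : phiK p D a (dd p f) = D (phiK p D a f) := by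
  induction f using MvPolynomial.induction_on with
  | C r =>
    have h1 : dd p (C r : RR p) = 0 := by
      have : (C r : RR p) = algebraMap (ZMod p) (RR p) r := rfl
      rw [this, Derivation.map_algebraMap]
    rw [h1, map_zero]
    have h2 : (C r : RR p) = ((r.val : ℕ) : RR p) := by
      conv_lhs => rw [← ZMod.natCast_zmod_val r]
      rw [map_natCast (C : ZMod p →+* RR p)]
    rw [h2, map_natCast]
    exact (d_natCast D hadd hleib r.val).symm
  | add f g ihf ihg =>
    rw [dd_add, map_add, map_add, ihf, ihg, hadd]
  | mul_X f i ih =>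
    rw [dd_mul, map_add, map_mul, map_mul, dd_X, phiK_X, phiK_X, map_mul, phiK_X,
      hleib, ih, Function.iterate_succ_apply']

end Transfer
noncomputable section Transfer2
open MvPolynomial

variable {K : Type*} [Field K] (p : ℕ) [CharP K p] [NeZero p] (D : K → K) (a : K)

theorem phiK_E (hadd : ∀ x y : K, D (x + y) = D x + D y)
    (hleib : ∀ x y : K, D (x * y) = x * D y + D x * y) (f : RR p) :
    phiK p D a (X 0 * dd p f) = a * D (phiK p D a f) := by
  rw [map_mul, phiK_X, phiK_dd p D a hadd hleib, Function.iterate_zero_apply]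

theorem phiK_E_iter (hadd : ∀ x y : K, D (x + y) = D x + D y)
    (hleib : ∀ x y : K, D (x * y) = x * D y + D x * y) (n : ℕ) (f : RR p) :
    phiK p D a ((fun c => X 0 * dd p c)^[n] f)
      = (fun c => a * D c)^[n] (phiK p D a f) := by
  induction n generalizing f with
  | zero => simp
  | succ n ih =>
    rw [Function.iterate_succ_apply, Function.iterate_succ_apply]
    show phiK p D a ((fun c => X 0 * dd p c)^[n] (X 0 * dd p f)) = _
    rw [ih, phiK_E p D a hadd hleib]

theorem E_pow_expand (hadd : ∀ x y : K, D (x + y) = D x + D y)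
    (hleib : ∀ x y : K, D (x * y) = x * D y + D x * y) (n : ℕ) (x : K) :
    (fun c => a * D c)^[n] x
      = ∑ k ∈ Finset.range (n+1), phiK p D a (FF p n k) * D^[k] x := by
  refine sumFormula D a (fun n k => phiK p D a (FF p n k)) hadd hleib ?_ ?_ ?_ ?_ n x
  · show phiK p D a 1 = 1; exact map_one _
  · intro k; show phiK p D a 0 = 0; exact map_zero _
  · intro n
    show phiK p D a (X 0 * dd p (FF p n 0)) = _
    rw [phiK_E p D a hadd hleib]
  · intro n k
    show phiK p D a (X 0 * dd p (FF p n (k+1)) + X 0 * FF p n k) = _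
    rw [map_add, phiK_E p D a hadd hleib, map_mul, phiK_X, Function.iterate_zero_apply]

/-- Hochschild's formula, assuming `D^[p] = h • D`. -/
theorem key_formula (hp : p.Prime) (hadd : ∀ x y : K, D (x + y) = D x + D y)
    (hleib : ∀ x y : K, D (x * y) = x * D y + D x * y)
    (h : K) (hD : ∀ x : K, D^[p] x = h * D x) (x : K) :
    (fun c => a * D c)^[p] x
      = ((fun c => a * D c)^[p-1] a) * D x + a ^ p * (h * D x) := by
  rw [E_pow_expand p D a hadd hleib p x]
  have hterm : ∀ k ∈ Finset.range (p+1),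
      phiK p D a (FF p p k) * D^[k] x
      = (if k = 1 then ((fun c => a * D c)^[p-1] a) * D x else 0)
        + (if k = p then a ^ p * (h * D x) else 0) := by
    intro k hk
    simp only [Finset.mem_range] at hk
    have hp2 : 2 ≤ p := hp.two_le
    rcases eq_or_ne k 1 with rfl | hk1
    · rw [if_pos rfl, if_neg (by omega)]
      have : FF p p 1 = (fun c => X 0 * dd p c)^[p-1] (X 0) := by
        have := FF_one p (p-1)
        rwa [show p - 1 + 1 = p by omega] at this
      rw [this, phiK_E_iter p D a hadd hleib, phiK_X, Function.iterate_zero_apply,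
        Function.iterate_one, add_zero]
    rcases eq_or_ne k p with rfl | hkp
    · rw [if_neg hk1, if_pos rfl, FF_diag, map_pow, phiK_X, Function.iterate_zero_apply,
        hD x, zero_add]
    rcases eq_or_ne k 0 with rfl | hk0
    · rw [if_neg hk1, if_neg hkp, FF_zero_right p p (by omega), map_zero, zero_mul, add_zero]
    · rw [if_neg hk1, if_neg hkp, FF_middle p hp (by omega) (by omega), map_zero, zero_mul,
        add_zero]
  rw [Finset.sum_congr rfl hterm, Finset.sum_add_distrib,
    Finset.sum_ite_eq' (Finset.range (p+1)) 1, Finset.sum_ite_eq' (Finset.range (p+1)) p,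
    if_pos (Finset.mem_range.2 (by have := hp.two_le; omega)),
    if_pos (Finset.mem_range.2 (by omega))]

end Transfer2

/-- If `B` is an integral domain of prime characteristic `p` with fraction field `K` and
`D` is a `p`-closed derivation of `K` (i.e. `D^p = h·D` for some `h ∈ K`), then for every
`a ∈ K` the derivation `a·D` is again `p`-closed, and for `a ≠ 0` one may take
`g = a^(p-1)·h + a⁻¹·(aD)^(p-1)(a)`. -/
theorem pClosed_smul {B K : Type*} [CommRing B] [IsDomain B] [Field K] [Algebra B K]
    [IsFractionRing B K] (p : ℕ) (hp : p.Prime) [CharP K p]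
    (D : K → K) (hadd : ∀ x y : K, D (x + y) = D x + D y)
    (hleib : ∀ x y : K, D (x * y) = x * D y + D x * y)
    (h : K) (hD : ∀ x : K, D^[p] x = h * D x) (a : K) :
    (∃ g : K, ∀ x : K, (fun c => a * D c)^[p] x = g * (a * D x)) ∧
    (a ≠ 0 → ∀ x : K,
      (fun c => a * D c)^[p] x =
        (a ^ (p - 1) * h + a⁻¹ * ((fun c => a * D c)^[p - 1] a)) * (a * D x)) := by
  haveI : NeZero p := ⟨hp.ne_zero⟩
  have key := key_formula p D a hp hadd hleib h hD
  have main : a ≠ 0 → ∀ x : K,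
      (fun c => a * D c)^[p] x =
        (a ^ (p - 1) * h + a⁻¹ * ((fun c => a * D c)^[p - 1] a)) * (a * D x) := by
    intro ha x
    rw [key x]
    have hpow : a ^ (p - 1) * a = a ^ p := by
      rw [← pow_succ]
      congr 1
      have := hp.two_le; omega
    field_simp
    linear_combination (-(h * D x)) * hpow
  constructor
  · rcases eq_or_ne a 0 with rfl | ha
    · refine ⟨0, fun x => ?_⟩
      have hz : (fun c => (0:K) * D c) = fun _ => 0 := by
        funext c; rw [zero_mul]
      rw [hz]
      rcases Nat.exists_eq_succ_of_ne_zero hp.ne_zero with ⟨q, rfl⟩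
      rw [Function.iterate_succ_apply']
      simp
    · exact ⟨a ^ (p - 1) * h + a⁻¹ * ((fun c => a * D c)^[p - 1] a), main ha⟩
  · exact main
end

section
/- Let B be a local domain containing a field of characteristic p > 0, with maximal ideal 𝔪 and fraction field K, and let D : B → B be a nonzero derivation that is p-closed (its unique extension to K satisfies D^p = h·D for some h ∈ K). Assume the ideal of B generated by the image of D is principal. Then there exist a family (x_j)_{j∈J} of elements with D(x_j) = 0 and an element y such that the x_j together with y generate 𝔪. Moreover, if 𝔪 can be generated by n elements, then one can choose such a family with |J| = n − 1. -/
open Finset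

namespace GoodCoord

variable {B : Type*} [CommRing B]

section Basic

variable (E : B → B)

theorem E_zero (hadd : ∀ x y : B, E (x + y) = E x + E y) : E 0 = 0 := by
  have h := hadd 0 0
  simp only [add_zero] at h
  exact (left_eq_add.mp h)

theorem E_one (hleib : ∀ x y : B, E (x * y) = x * E y + E x * y) : E 1 = 0 := by
  have h := hleib 1 1
  simp only [mul_one, one_mul] at h
  exact (add_eq_left.mp h.symm)

theorem iter_zero (hadd : ∀ x y : B, E (x + y) = E x + E y) (k : ℕ) : E^[k] 0 = 0 := by
  induction k with
  | zero => rfl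
  | succ k ih => rw [Function.iterate_succ_apply, E_zero E hadd, ih]

theorem iter_add (hadd : ∀ x y : B, E (x + y) = E x + E y) (k : ℕ) (x y : B) :
    E^[k] (x + y) = E^[k] x + E^[k] y := by
  induction k generalizing x y with
  | zero => rfl
  | succ k ih => rw [Function.iterate_succ_apply, Function.iterate_succ_apply,
      Function.iterate_succ_apply, hadd, ih]

theorem iter_one (hadd : ∀ x y : B, E (x + y) = E x + E y)
    (hleib : ∀ x y : B, E (x * y) = x * E y + E x * y) (k : ℕ) : E^[k + 1] (1 : B) = 0 := by
  rw [Function.iterate_succ_apply, E_one E hleib, iter_zero E hadd]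

theorem E_sum (hadd : ∀ x y : B, E (x + y) = E x + E y) {ι : Type*} (s : Finset ι) (g : ι → B) :
    E (∑ i ∈ s, g i) = ∑ i ∈ s, E (g i) := by
  classical
  induction s using Finset.induction_on with
  | empty => simpa using E_zero E hadd
  | insert _ _ h ih => rw [Finset.sum_insert h, Finset.sum_insert h, hadd, ih]

theorem E_neg (hadd : ∀ x y : B, E (x + y) = E x + E y) (x : B) : E (-x) = - E x := by
  have h := hadd x (-x)
  rw [add_neg_cancel, E_zero E hadd] at h
  exact eq_neg_of_add_eq_zero_right h.symm

theorem E_natCast (hadd : ∀ x y : B, E (x + y) = E x + E y)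
    (hleib : ∀ x y : B, E (x * y) = x * E y + E x * y) (n : ℕ) : E (n : B) = 0 := by
  induction n with
  | zero => exact_mod_cast E_zero E hadd
  | succ n ih => push_cast; rw [hadd, ih, E_one E hleib, add_zero]

theorem E_neg_one_pow (hadd : ∀ x y : B, E (x + y) = E x + E y)
    (hleib : ∀ x y : B, E (x * y) = x * E y + E x * y) (j : ℕ) : E ((-1 : B) ^ j) = 0 := by
  rcases neg_one_pow_eq_or B j with h | h <;> rw [h]
  · exact E_one E hleib
  · rw [E_neg E hadd, E_one E hleib, neg_zero]

end Basic


theorem iter_add' (E : B → B) (hadd : ∀ x y : B, E (x + y) = E x + E y) (k : ℕ) (x y : B) :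
    E^[k] (x + y) = E^[k] x + E^[k] y := by
  induction k generalizing x y with
  | zero => rfl
  | succ k ih => rw [Function.iterate_succ_apply, Function.iterate_succ_apply,
      Function.iterate_succ_apply, hadd, ih]

section YLemmas
variable (E : B → B) (y : B)
variable (hadd : ∀ x y : B, E (x + y) = E x + E y)
variable (hleib : ∀ x y : B, E (x * y) = x * E y + E x * y)
variable (hy : E y = 1)

include hadd hleib hy in
theorem iter_y (k : ℕ) (f : B) :
    E^[k] (y * f) = y * E^[k] f + (k : B) * E^[k - 1] f := by
  have sub1 : ∀ (k : ℕ) (g : B), (k : B) * E^[k - 1] (E g) = (k : B) * E^[k] g := by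
    intro k g
    cases k with
    | zero => simp
    | succ k =>
      rw [Nat.add_sub_cancel, ← Function.iterate_succ_apply E k g]
  induction k generalizing f with
  | zero => simp
  | succ k ih =>
    rw [Function.iterate_succ_apply, hleib, hy, one_mul,
      iter_add' E hadd, ih (E f), sub1 k f, ← Function.iterate_succ_apply E k f,
      Nat.add_sub_cancel]
    push_cast
    ring

include hleib hy in
theorem E_pow_y (j : ℕ) : E (y ^ (j + 1)) = ((j : B) + 1) * y ^ j := by
  induction j with
  | zero => simpa using hy
  | succ j ih =>
    rw [pow_succ, hleib, hy, mul_one, ih]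
    push_cast
    ring
end YLemmas

section Mu
variable (p : ℕ)

/-- `(-1)^j / j!` in a ring of characteristic `p`. -/
def mu (B : Type*) [CommRing B] (p j : ℕ) : B :=
  (-1 : B) ^ j * ((((j.factorial : ZMod p))⁻¹.val : ℕ) : B)

variable (hp : p.Prime) [CharP B p]

include hp in
theorem mu_zero : mu B p 0 = 1 := by
  haveI := Fact.mk hp
  haveI : Fact (1 < p) := ⟨hp.one_lt⟩
  simp [mu, Nat.factorial_zero, ZMod.val_one]

include hp in
theorem mu_step (j : ℕ) (hj : j + 1 < p) :
    ((j : B) + 1) * mu B p (j + 1) = - mu B p j := by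
  haveI := Fact.mk hp
  have hnd1 : ¬ p ∣ (j + 1) := fun h => absurd (Nat.le_of_dvd (Nat.succ_pos j) h) (by omega)
  have h1 : ((j : ZMod p) + 1) ≠ 0 := by
    have : ((j + 1 : ℕ) : ZMod p) ≠ 0 := by
      rw [Ne, ZMod.natCast_eq_zero_iff]; exact hnd1
    push_cast at this; exact this
  have key : ((j : ZMod p) + 1) * (((j+1).factorial : ZMod p))⁻¹ = ((j.factorial : ZMod p))⁻¹ := by
    rw [Nat.factorial_succ]
    push_cast
    rw [mul_inv, ← mul_assoc, mul_inv_cancel₀ h1, one_mul]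
  have key2 : (((j + 1) * ((((j+1).factorial : ZMod p))⁻¹).val : ℕ) : ZMod p)
      = (((((j.factorial : ZMod p))⁻¹).val : ℕ) : ZMod p) := by
    push_cast
    rw [ZMod.natCast_val, ZMod.natCast_val, ZMod.cast_id, ZMod.cast_id]
    exact key
  have keyB : (((j + 1) * ((((j+1).factorial : ZMod p))⁻¹).val : ℕ) : B)
      = ((((((j.factorial : ZMod p))⁻¹).val : ℕ)) : B) :=
    CharP.natCast_eq_natCast' B p ((ZMod.natCast_eq_natCast_iff _ _ p).mp key2)
  push_cast at keyB
  unfold mu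
  linear_combination ((-1 : B) ^ (j + 1)) * keyB

end Mu

section Rel
variable (E : B → B) (y : B)
variable (hadd : ∀ x y : B, E (x + y) = E x + E y)
variable (hleib : ∀ x y : B, E (x * y) = x * E y + E x * y)
variable (hy : E y = 1)

include hadd hleib hy in
theorem shift_rel (M : ℕ) (c : ℕ → B)
    (hrel : ∀ f : B, ∑ k ∈ range (M + 1), c k * E^[k] f = 0) :
    ∀ f : B, ∑ k ∈ range M, ((k : B) + 1) * c (k + 1) * E^[k] f = 0 := by
  intro f
  have h := hrel (y * f)
  have hexp : ∑ k ∈ range (M + 1), c k * E^[k] (y * f)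
      = y * (∑ k ∈ range (M + 1), c k * E^[k] f)
        + ∑ k ∈ range (M + 1), (k : B) * c k * E^[k - 1] f := by
    rw [Finset.mul_sum, ← Finset.sum_add_distrib]
    refine Finset.sum_congr rfl fun k _ => ?_
    rw [iter_y E y hadd hleib hy k f]
    ring
  rw [hexp, hrel f, mul_zero, zero_add, Finset.sum_range_succ'] at h
  simpa using h

include hadd hleib hy in
theorem pure_rel (p : ℕ) (hp : p.Prime) [CharP B p] [IsDomain B] :
    ∀ (M : ℕ), M < p → ∀ (c : ℕ → B),
      (∀ f : B, ∑ k ∈ range (M + 1), c k * E^[k] f = 0) → ∀ k ≤ M, c k = 0 := by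
  intro M
  induction M with
  | zero =>
    intro _ c h k hk
    interval_cases k
    have h1 := h 1
    simpa using h1
  | succ M ih =>
    intro hM c h k hk
    have h0 : c 0 = 0 := by
      have h1 := h 1
      rw [Finset.sum_range_succ'] at h1
      simp only [Function.iterate_zero_apply, mul_one] at h1
      have hz : ∀ j ∈ range (M + 1), c (j + 1) * E^[j + 1] (1 : B) = 0 := by
        intro j _
        rw [iter_one E hadd hleib j, mul_zero]
      rw [Finset.sum_congr rfl hz, Finset.sum_const_zero, zero_add] at h1
      exact h1
    have h' := shift_rel E y hadd hleib hy (M + 1) c h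
    have hM' : M < p := Nat.lt_of_succ_lt hM
    have hc' := ih hM' (fun k => ((k : B) + 1) * c (k + 1)) h'
    cases k with
    | zero => exact h0
    | succ j =>
      have hj : j ≤ M := Nat.succ_le_succ_iff.mp hk
      have hjz := hc' j hj
      have hne : ((j : B) + 1) ≠ 0 := by
        have : ((j + 1 : ℕ) : B) ≠ 0 := by
          rw [Ne, CharP.cast_eq_zero_iff B p]
          intro hdvd
          have := Nat.le_of_dvd (Nat.succ_pos j) hdvd
          omega
        push_cast at this; exact this
      exact (mul_eq_zero.mp hjz).resolve_left hne

end Rel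

section Core
variable (E : B → B) (m : B)

/-- Coefficients of the expansion of `(m·E)^n` in powers of `E`. -/
def gcoef (E : B → B) (m : B) : ℕ → ℕ → B
  | 0, k => if k = 0 then 1 else 0
  | n+1, k => m * E (gcoef E m n k) + if k = 0 then 0 else m * gcoef E m n (k - 1)

variable (hadd : ∀ x y : B, E (x + y) = E x + E y)
variable (hleib : ∀ x y : B, E (x * y) = x * E y + E x * y)

include hadd in
theorem gcoef_zero : ∀ n k, n < k → gcoef E m n k = 0 := by
  intro n
  induction n with
  | zero =>
    intro k hk
    have : k ≠ 0 := by omega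
    simp [gcoef, this]
  | succ n ih =>
    intro k hk
    have h1 : gcoef E m n k = 0 := ih k (by omega)
    have hk0 : k ≠ 0 := by omega
    have h2 : gcoef E m n (k - 1) = 0 := ih (k - 1) (by omega)
    simp [gcoef, hk0, h1, h2, E_zero E hadd]

include hadd in
theorem gcoef_diag : ∀ n, gcoef E m n n = m ^ n := by
  intro n
  induction n with
  | zero => simp [gcoef]
  | succ n ih =>
    have h1 : gcoef E m n (n + 1) = 0 := gcoef_zero E m hadd n (n + 1) (by omega)
    simp [gcoef, h1, E_zero E hadd, ih, Nat.add_sub_cancel, pow_succ]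
    ring

include hadd hleib in
theorem gcoef_expand : ∀ (n : ℕ) (f : B),
    (fun x => m * E x)^[n] f = ∑ k ∈ range (n + 1), gcoef E m n k * E^[k] f := by
  intro n
  induction n with
  | zero => intro f; simp [gcoef]
  | succ n ih =>
    intro f
    rw [Function.iterate_succ_apply']
    show m * E ((fun x => m * E x)^[n] f) = _
    rw [ih f, E_sum E hadd]
    have hterm : ∀ k ∈ range (n + 1),
        E (gcoef E m n k * E^[k] f) = gcoef E m n k * E^[k + 1] f + E (gcoef E m n k) * E^[k] f := by
      intro k _
      rw [hleib, Function.iterate_succ_apply']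
    rw [Finset.sum_congr rfl hterm]
    rw [Finset.mul_sum]
    -- LHS: ∑_{k ∈ range (n+1)} (m * (gcoef n k * E^[k+1] f) + m * (E (gcoef n k) * E^[k] f))
    have hsplit : ∑ k ∈ range (n + 1),
          (m * (gcoef E m n k * E^[k + 1] f + E (gcoef E m n k) * E^[k] f))
        = (∑ k ∈ range (n + 1), m * gcoef E m n k * E^[k + 1] f)
          + ∑ k ∈ range (n + 1), m * E (gcoef E m n k) * E^[k] f := by
      rw [← Finset.sum_add_distrib]
      refine Finset.sum_congr rfl fun k _ => by ring
    rw [hsplit]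
    have hA : ∑ k ∈ range (n + 1), m * gcoef E m n k * E^[k + 1] f
        = ∑ k ∈ range (n + 2), (if k = 0 then 0 else m * gcoef E m n (k - 1)) * E^[k] f := by
      rw [Finset.sum_range_succ' (fun k => (if k = 0 then 0 else m * gcoef E m n (k - 1)) * E^[k] f) (n + 1)]
      simp [Nat.add_sub_cancel]
    have hB : ∑ k ∈ range (n + 2), m * E (gcoef E m n k) * E^[k] f
        = ∑ k ∈ range (n + 1), m * E (gcoef E m n k) * E^[k] f := by
      rw [Finset.sum_range_succ]
      rw [gcoef_zero E m hadd n (n + 1) (by omega), E_zero E hadd]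
      ring
    rw [hA, ← hB, ← Finset.sum_add_distrib]
    refine Finset.sum_congr rfl fun k _ => ?_
    show _ = gcoef E m (n + 1) k * E^[k] f
    simp only [gcoef]
    ring

include hadd hleib in
theorem core_lemma (p : ℕ) (hp : p.Prime) [CharP B p] [IsDomain B]
    (y : B) (hy : E y = 1) (hm : m ≠ 0)
    (h₁ h₂ : B) (hh₂ : h₂ ≠ 0)
    (hcl : ∀ f : B, h₂ * (fun x => m * E x)^[p] f = h₁ * (m * E f)) :
    ∀ f : B, E^[p] f = 0 := by
  intro f₀
  set c : ℕ → B := fun k => h₂ * gcoef E m p k - if k = 1 then h₁ * m else 0 with hc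
  have master : ∀ f : B, ∑ k ∈ range (p + 1), c k * E^[k] f = 0 := by
    intro f
    have h1 := hcl f
    rw [gcoef_expand E m hadd hleib p f] at h1
    have expand : ∑ k ∈ range (p + 1), c k * E^[k] f
        = h₂ * (∑ k ∈ range (p + 1), gcoef E m p k * E^[k] f)
          - ∑ k ∈ range (p + 1), (if k = 1 then h₁ * m * E^[k] f else 0) := by
      rw [Finset.mul_sum, ← Finset.sum_sub_distrib]
      refine Finset.sum_congr rfl fun k _ => ?_
      by_cases hk : k = 1 <;> simp [hc, hk] <;> ring
    rw [expand, Finset.sum_ite_eq' (range (p + 1)) 1 (fun k => h₁ * m * E^[k] f)]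
    have h1mem : (1 : ℕ) ∈ range (p + 1) := by
      simp [Nat.lt_succ_iff]; exact hp.one_le
    rw [if_pos h1mem, Function.iterate_one, h1]
    ring
  have h0 : c 0 = 0 := by
    have h1 := master 1
    rw [Finset.sum_range_succ'] at h1
    simp only [Function.iterate_zero_apply, mul_one] at h1
    have hz : ∀ j ∈ range p, c (j + 1) * E^[j + 1] (1 : B) = 0 := by
      intro j _
      rw [iter_one E hadd hleib j, mul_zero]
    rw [Finset.sum_congr rfl hz, Finset.sum_const_zero, zero_add] at h1
    exact h1
  have hsh := shift_rel E y hadd hleib hy p c master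
  have hrel' : ∀ f : B, ∑ k ∈ range ((p - 1) + 1), ((k : B) + 1) * c (k + 1) * E^[k] f = 0 := by
    have hpos : (p - 1) + 1 = p := Nat.succ_pred_eq_of_pos hp.pos
    rw [hpos]
    exact hsh
  have hpure := pure_rel E y hadd hleib hy p hp (p - 1) (by have := hp.pos; omega) _ hrel'
  have hcz : ∀ k, k < p → c k = 0 := by
    intro k hk
    cases k with
    | zero => exact h0
    | succ j =>
      have hj : j ≤ p - 1 := by omega
      have := hpure j hj
      have hne : ((j : B) + 1) ≠ 0 := by
        have h2 : ((j + 1 : ℕ) : B) ≠ 0 := by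
          rw [Ne, CharP.cast_eq_zero_iff B p]
          intro hdvd
          have := Nat.le_of_dvd (Nat.succ_pos j) hdvd
          omega
        push_cast at h2; exact h2
      exact (mul_eq_zero.mp this).resolve_left hne
  have hfin := master f₀
  rw [Finset.sum_range_succ] at hfin
  have hzz : ∀ k ∈ range p, c k * E^[k] f₀ = 0 := by
    intro k hk
    rw [hcz k (mem_range.mp hk), zero_mul]
  rw [Finset.sum_congr rfl hzz, Finset.sum_const_zero, zero_add] at hfin
  have hcp : c p = h₂ * m ^ p := by
    have : p ≠ 1 := hp.ne_one
    simp [hc, this, gcoef_diag E m hadd p]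
  rw [hcp] at hfin
  exact (mul_eq_zero.mp hfin).resolve_left (mul_ne_zero hh₂ (pow_ne_zero p hm))

end Core

section Taylor
variable (E : B → B) (y : B) (p : ℕ)

/-- Taylor "kernel part" of `f` with respect to `E` and `y`. -/
def tay (E : B → B) (y : B) (p : ℕ) (f : B) : B :=
  ∑ j ∈ range p, mu B p j * (y ^ j * E^[j] f)

/-- The complementary part: `f = tay f + y * tayq f`. -/
def tayq (E : B → B) (y : B) (p : ℕ) (f : B) : B :=
  - ∑ j ∈ range (p - 1), mu B p (j + 1) * (y ^ j * E^[j + 1] f)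

variable (hadd : ∀ x y : B, E (x + y) = E x + E y)
variable (hleib : ∀ x y : B, E (x * y) = x * E y + E x * y)
variable (hy : E y = 1) (hp : p.Prime) [CharP B p]

include hadd hleib hy hp in
theorem tay_ker (hEp : ∀ f : B, E^[p] f = 0) (f : B) : E (tay E y p f) = 0 := by
  obtain ⟨q, rfl⟩ : ∃ q, p = q + 1 := ⟨p - 1, (Nat.succ_pred_eq_of_pos hp.pos).symm⟩
  unfold tay
  rw [E_sum E hadd, Finset.sum_range_succ']
  have hE0 : E (mu B (q+1) 0 * (y ^ 0 * E^[0] f)) = E f := by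
    rw [mu_zero (q+1) hp]
    simp
  rw [hE0]
  have hterm : ∀ j ∈ range q,
      E (mu B (q+1) (j+1) * (y ^ (j+1) * E^[j+1] f))
        = (mu B (q+1) (j+1) * y ^ (j+1) * E^[j+1+1] f)
          - mu B (q+1) j * y ^ j * E^[j+1] f := by
    intro j hj
    have hj' : j + 1 < q + 1 := by simpa using mem_range.mp hj
    rw [hleib, hleib, E_pow_y E y hleib hy j, ← Function.iterate_succ_apply' E (j+1) f]
    have hmu : E (mu B (q+1) (j+1)) = 0 := by
      unfold mu
      rw [hleib, E_natCast E hadd hleib, mul_zero, E_neg_one_pow E hadd hleib, zero_mul,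
        add_zero]
    rw [hmu]
    have hstep := mu_step (q+1) hp j hj' (B := B)
    -- goal involves ((j:B)+1) * mu (j+1) = - mu j
    linear_combination (y ^ j * E^[j+1] f) * hstep
  rw [Finset.sum_congr rfl hterm]
  have htel : ∑ j ∈ range q,
      ((mu B (q+1) (j+1) * y ^ (j+1) * E^[j+1+1] f) - mu B (q+1) j * y ^ j * E^[j+1] f)
      = mu B (q+1) q * y ^ q * E^[q+1] f - mu B (q+1) 0 * y ^ 0 * E^[0+1] f := by
    exact Finset.sum_range_sub (fun j => mu B (q+1) j * y ^ j * E^[j+1] f) q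
  rw [htel, hEp f, mu_zero (q+1) hp]
  simp

include hp in
theorem tay_split (f : B) : f = tay E y p f + y * tayq E y p f := by
  obtain ⟨q, rfl⟩ : ∃ q, p = q + 1 := ⟨p - 1, (Nat.succ_pred_eq_of_pos hp.pos).symm⟩
  unfold tay tayq
  rw [Finset.sum_range_succ']
  have h0 : mu B (q+1) 0 * (y ^ 0 * E^[0] f) = f := by
    rw [mu_zero (q+1) hp]; simp
  rw [h0]
  simp only [Nat.add_sub_cancel]
  have hterm : ∀ j ∈ range q,
      mu B (q+1) (j+1) * (y ^ (j+1) * E^[j+1] f)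
        = y * (mu B (q+1) (j+1) * (y ^ j * E^[j+1] f)) := by
    intro j _
    rw [pow_succ]
    ring
  rw [Finset.sum_congr rfl hterm, ← Finset.mul_sum]
  ring

end Taylor

section Exp
variable (E : B → B) (y : B) (p : ℕ)
variable (hadd : ∀ x y : B, E (x + y) = E x + E y)
variable (hleib : ∀ x y : B, E (x * y) = x * E y + E x * y)
variable (hy : E y = 1) (hp : p.Prime) [CharP B p]

include hadd hleib hy hp in
theorem exp_mem (hEp : ∀ f : B, E^[p] f = 0) (I : Ideal B) (hI : ∀ g ∈ I, E g ∈ I) :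
    ∀ (r : ℕ) (f : B), E^[r] f = 0 → f ∈ I →
      f ∈ Ideal.span {x : B | x ∈ I ∧ E x = 0} := by
  intro r
  induction r with
  | zero =>
    intro f h0 _
    simp only [Function.iterate_zero_apply] at h0
    rw [h0]
    exact Ideal.zero_mem _
  | succ r ih =>
    intro f hr hfI
    have hiterI : ∀ j, E^[j] f ∈ I := by
      intro j
      induction j with
      | zero => exact hfI
      | succ j ihj =>
        rw [Function.iterate_succ_apply']
        exact hI _ ihj
    have htayI : tay E y p f ∈ Ideal.span {x : B | x ∈ I ∧ E x = 0} := by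
      apply Ideal.subset_span
      constructor
      · unfold tay
        exact Ideal.sum_mem _ fun j _ => Ideal.mul_mem_left _ _
          (Ideal.mul_mem_left _ _ (hiterI j))
      · exact tay_ker E y p hadd hleib hy hp hEp f
    have hsplit := tay_split E y p hp f
    have hrest : y * tayq E y p f ∈ Ideal.span {x : B | x ∈ I ∧ E x = 0} := by
      unfold tayq
      rw [mul_neg]
      apply neg_mem
      rw [Finset.mul_sum]
      apply Ideal.sum_mem
      intro j _
      have hgj : E^[j + 1] f ∈ Ideal.span {x : B | x ∈ I ∧ E x = 0} := by
        apply ih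
        · have : E^[r] (E^[j+1] f) = E^[j] (E^[r+1] f) := by
            rw [← Function.iterate_add_apply, ← Function.iterate_add_apply]
            congr 1
            omega
          rw [this, hr, iter_zero E hadd]
        · exact hiterI (j + 1)
      have : y * (mu B p (j+1) * (y ^ j * E^[j+1] f))
          = (y * (mu B p (j+1) * y ^ j)) * E^[j+1] f := by ring
      rw [this]
      exact Ideal.mul_mem_left _ _ hgj
    rw [hsplit]
    exact Ideal.add_mem _ htayI hrest

end Exp

section Exchange
variable {B : Type*} [CommRing B] [IsLocalRing B]

theorem unit_of_not_mem_max {u : B} (h : u ∉ IsLocalRing.maximalIdeal B) : IsUnit u := by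
  by_contra hu
  exact h ((IsLocalRing.mem_maximalIdeal u).mpr hu)

theorem one_sub_unit_of_mem_max {u : B} (h : u ∈ IsLocalRing.maximalIdeal B) :
    IsUnit (1 - u) := by
  by_contra hu
  have h1 : (1 - u) ∈ IsLocalRing.maximalIdeal B := (IsLocalRing.mem_maximalIdeal _).mpr hu
  have : (1 : B) ∈ IsLocalRing.maximalIdeal B := by
    have := Ideal.add_mem _ h1 h
    simpa using this
  exact (IsLocalRing.maximalIdeal.isMaximal B).ne_top (Ideal.eq_top_of_isUnit_mem _ this isUnit_one)

theorem exchange [DecidableEq B] (S : Set B) (hS : Ideal.span S = IsLocalRing.maximalIdeal B) :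
    ∀ (k : ℕ) (A C : Finset B), A.card = k → (C : Set B) ⊆ S →
      Ideal.span ((↑(A ∪ C) : Set B)) = IsLocalRing.maximalIdeal B →
      ∃ C' : Finset B, (C' : Set B) ⊆ S ∧ C'.card ≤ k + C.card ∧
        Ideal.span ((C' : Set B)) = IsLocalRing.maximalIdeal B := by
  classical
  intro k
  induction k with
  | zero =>
    intro A C hA hC hspan
    rw [Finset.card_eq_zero] at hA
    subst hA
    refine ⟨C, hC, by simp, ?_⟩
    simpa using hspan
  | succ k ih =>
    intro A C hA hC hspan
    have hne : A.Nonempty := Finset.card_pos.mp (by omega)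
    obtain ⟨τ, hτA⟩ := hne
    set A' := A.erase τ with hA'
    have hcard' : A'.card = k := by
      rw [hA', Finset.card_erase_of_mem hτA, hA]
      omega
    have hfins : A ∪ C = insert τ (A' ∪ C) := by
      rw [← Finset.insert_union, hA', Finset.insert_erase hτA]
    have hins : (↑(A ∪ C) : Set B) = insert τ (↑(A' ∪ C) : Set B) := by
      rw [hfins, Finset.coe_insert]
    rw [hins] at hspan
    set W : Set B := (↑(A' ∪ C) : Set B) with hW
    have hτm : τ ∈ IsLocalRing.maximalIdeal B := by
      rw [← hspan]
      exact Ideal.subset_span (Set.mem_insert τ W)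
    have hτS : τ ∈ Ideal.span S := by rw [hS]; exact hτm
    obtain ⟨N, cf, σ, hsum⟩ := Submodule.mem_span_set'.mp hτS
    have hσmem : ∀ i, (σ i : B) ∈ Ideal.span (insert τ W) := by
      intro i
      rw [hspan, ← hS]
      exact Ideal.subset_span (σ i).2
    have hdec : ∀ i : Fin N, ∃ a z, z ∈ Ideal.span W ∧ (σ i : B) = a * τ + z := by
      intro i
      obtain ⟨a, z, hz, hzz⟩ := Submodule.mem_span_insert.mp (hσmem i)
      exact ⟨a, z, hz, by simpa using hzz⟩
    choose av zv hzv hzdec using hdec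
    have hτeq : τ = (∑ i, cf i * av i) * τ + ∑ i, cf i * zv i := by
      conv_lhs => rw [← hsum]
      rw [Finset.sum_mul, ← Finset.sum_add_distrib]
      refine Finset.sum_congr rfl fun i _ => ?_
      rw [smul_eq_mul, hzdec i]
      ring
    set u : B := ∑ i, cf i * av i with hu
    by_cases hum : u ∈ IsLocalRing.maximalIdeal B
    · -- τ is redundant
      obtain ⟨w, hw⟩ := one_sub_unit_of_mem_max hum
      have hzmem : ∑ i, cf i * zv i ∈ Ideal.span W :=
        Ideal.sum_mem _ fun i _ => Ideal.mul_mem_left _ _ (hzv i)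
      have hτW : τ ∈ Ideal.span W := by
        have h1 : (1 - u) * τ = ∑ i, cf i * zv i := by linear_combination hτeq
        have h2 : τ = ↑w⁻¹ * ∑ i, cf i * zv i := by
          rw [← h1, ← hw, ← mul_assoc, Units.inv_mul, one_mul]
        rw [h2]
        exact Ideal.mul_mem_left _ _ hzmem
      have hspan' : Ideal.span W = IsLocalRing.maximalIdeal B := by
        rw [← hspan]
        exact (Submodule.span_insert_eq_span hτW).symm
      obtain ⟨C', hC'S, hC'card, hC'span⟩ := ih A' C hcard' hC hspan'
      exact ⟨C', hC'S, by omega, hC'span⟩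
    · -- exchange τ for an element of S
      have hex : ∃ i : Fin N, cf i * av i ∉ IsLocalRing.maximalIdeal B := by
        by_contra hall
        push_neg at hall
        exact hum (Ideal.sum_mem _ fun i _ => hall i)
      obtain ⟨i₀, hi₀⟩ := hex
      have hunit : IsUnit (av i₀) :=
        isUnit_of_mul_isUnit_right (unit_of_not_mem_max hi₀)
      obtain ⟨w₀, hw₀⟩ := hunit
      set σ₀ : B := ↑(σ i₀) with hσ₀
      have hτin : τ ∈ Ideal.span (insert σ₀ W) := by
        have h2 : τ = ↑w₀⁻¹ * (σ₀ - zv i₀) := by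
          have h3 : ↑w₀ * τ = σ₀ - zv i₀ := by
            rw [hw₀]
            have := hzdec i₀
            rw [hσ₀]
            linear_combination -this
          rw [← h3, ← mul_assoc, Units.inv_mul, one_mul]
        rw [h2]
        apply Ideal.mul_mem_left
        apply sub_mem
        · exact Ideal.subset_span (Set.mem_insert σ₀ W)
        · exact Ideal.span_mono (Set.subset_insert σ₀ W) (hzv i₀)
      have hspan2 : Ideal.span (insert σ₀ W) = IsLocalRing.maximalIdeal B := by
        apply le_antisymm
        · rw [Ideal.span_le]
          intro x hx
          rcases Set.mem_insert_iff.mp hx with hx | hx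
          · subst hx
            rw [← hS]
            exact Ideal.subset_span (σ i₀).2
          · rw [← hspan]
            exact Ideal.subset_span (Set.mem_insert_of_mem τ hx)
        · rw [← hspan, Ideal.span_le]
          intro x hx
          rcases Set.mem_insert_iff.mp hx with hx | hx
          · subst hx
            exact hτin
          · exact Ideal.subset_span (Set.mem_insert_of_mem σ₀ hx)
      have hcoe : ((A' ∪ insert σ₀ C : Finset B) : Set B) = insert σ₀ W := by
        rw [hW]
        push_cast
        rw [Set.union_insert]
      obtain ⟨C', hC'S, hC'card, hC'span⟩ := ih A' (insert σ₀ C) hcard'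
        (by
          rw [Finset.coe_insert]
          exact Set.insert_subset ((σ i₀).2) hC)
        (by rw [hcoe]; exact hspan2)
      refine ⟨C', hC'S, ?_, hC'span⟩
      have := Finset.card_insert_le σ₀ C
      omega

end Exchange

theorem getD_mem_or {α : Type*} (L : List α) (i : ℕ) (d : α) :
    L.getD i d ∈ L ∨ L.getD i d = d := by
  by_cases h : i < L.length
  · left
    rw [List.getD_eq_getElem L d h]
    exact List.getElem_mem h
  · right
    exact List.getD_eq_default L d (by omega)

theorem pad {B : Type*} [CommRing B] (n : ℕ) (C : Finset B) (hC : C.card ≤ n) :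
    ∃ (x : Fin (n - 1) → B) (y : B),
      (∀ j, x j ∈ (↑C : Set B) ∪ {0}) ∧ (y ∈ (↑C : Set B) ∪ {0}) ∧
      (↑C : Set B) ⊆ Set.range x ∪ {y} := by
  classical
  set L := C.toList with hL
  have hlen : L.length = C.card := Finset.length_toList C
  refine ⟨fun i => L.getD i 0, L.getD (n - 1) 0, ?_, ?_, ?_⟩
  · intro j
    rcases getD_mem_or L j 0 with h | h
    · left; exact Finset.mem_coe.mpr (Finset.mem_toList.mp h)
    · right; exact h
  · rcases getD_mem_or L (n - 1) 0 with h | h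
    · left; exact Finset.mem_coe.mpr (Finset.mem_toList.mp h)
    · right; exact h
  · intro σ hσ
    have hmem : σ ∈ L := Finset.mem_toList.mpr (Finset.mem_coe.mp hσ)
    obtain ⟨i, hi, hgi⟩ := List.mem_iff_getElem.mp hmem
    by_cases hin : i < n - 1
    · left
      refine ⟨⟨i, hin⟩, ?_⟩
      show L.getD i 0 = σ
      rw [List.getD_eq_getElem L 0 hi, hgi]
    · right
      have : i = n - 1 := by omega
      subst this
      rw [Set.mem_singleton_iff, List.getD_eq_getElem L 0 hi, hgi]
end GoodCoord

open GoodCoord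

/-- Let `B` be a local domain containing a field of characteristic `p > 0`, with maximal
ideal `𝔪`, and let `D : B → B` be a nonzero `p`-closed derivation (its unique extension to
the fraction field satisfies `D^p = h·D` for some `h` in the fraction field; equivalently,
since `D^p` is again a derivation in characteristic `p`, there are `h₁, h₂ ∈ B` with
`h₂ ≠ 0` and `h₂·D^p(f) = h₁·D(f)` for all `f`).  Assume the ideal generated by the image
of `D` is principal.  Then `𝔪` is generated by a set `s` of elements killed by `D`
together with one further element `y`; moreover if `𝔪` is generated by `n` elements then
one can take `s` of cardinality `n - 1`. -/
theorem good_coordinates_of_pClosed {B F : Type*} [CommRing B] [IsDomain B] [IsLocalRing B]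
    [Field F] [Algebra F B] (p : ℕ) (hp : p.Prime) [CharP F p]
    (D : B → B) (hadd : ∀ x y : B, D (x + y) = D x + D y)
    (hleib : ∀ x y : B, D (x * y) = x * D y + D x * y)
    (hD : D ≠ 0)
    (hclosed : ∃ h₁ h₂ : B, h₂ ≠ 0 ∧ ∀ f : B, h₂ * D^[p] f = h₁ * D f)
    (hprin : (Ideal.span (Set.range D)).IsPrincipal) :
    (∃ (s : Set B) (y : B), (∀ x ∈ s, D x = 0) ∧
        Ideal.span (s ∪ {y}) = IsLocalRing.maximalIdeal B) ∧
    (∀ (n : ℕ) (t : Finset B), t.card = n →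
        Ideal.span (t : Set B) = IsLocalRing.maximalIdeal B →
        ∃ (x : Fin (n - 1) → B) (y : B), (∀ j, D (x j) = 0) ∧
          Ideal.span (Set.range x ∪ {y}) = IsLocalRing.maximalIdeal B) := by
  classical
  haveI : CharP B p := charP_of_injective_algebraMap (algebraMap F B).injective p
  obtain ⟨h₁, h₂, hh₂, hcl⟩ := hclosed
  haveI := hprin
  obtain ⟨a, ha⟩ := Submodule.IsPrincipal.principal (Ideal.span (Set.range D))
  have hdvd : ∀ f : B, ∃ e, D f = a * e := by
    intro f
    have h1 : D f ∈ Ideal.span (Set.range D) := Ideal.subset_span ⟨f, rfl⟩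
    rw [ha] at h1
    exact Ideal.mem_span_singleton.mp h1
  set E : B → B := fun f => (hdvd f).choose with hEdef
  have hE : ∀ f, D f = a * E f := fun f => (hdvd f).choose_spec
  have ha0 : a ≠ 0 := by
    intro h
    apply hD
    funext f
    have h2 := hE f
    rw [h, zero_mul] at h2
    exact h2
  have hEadd : ∀ x y : B, E (x + y) = E x + E y := by
    intro x y
    apply mul_left_cancel₀ ha0
    rw [← hE, hadd, hE, hE, mul_add]
  have hEleib : ∀ x y : B, E (x * y) = x * E y + E x * y := by
    intro x y
    apply mul_left_cancel₀ ha0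
    have h3 : a * E (x * y) = a * (x * E y + E x * y) := by
      rw [← hE, hleib, hE, hE]
      ring
    exact h3
  -- there exists an element whose E-value is a unit
  have haspan : a ∈ Ideal.span (Set.range D) := by
    rw [ha]
    exact Submodule.mem_span_singleton_self a
  obtain ⟨N, cf, σ, hsum⟩ := Submodule.mem_span_set'.mp haspan
  have hDσ : ∀ i : Fin N, ∃ f, D f = ↑(σ i) := fun i => (σ i).2
  choose Fi hFi using hDσ
  have hone : (∑ i, cf i * E (Fi i)) = 1 := by
    apply mul_left_cancel₀ ha0
    rw [mul_one]
    conv_rhs => rw [← hsum]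
    rw [Finset.mul_sum]
    refine Finset.sum_congr rfl fun i _ => ?_
    rw [smul_eq_mul, ← hFi i, hE (Fi i)]
    ring
  have hexu : ∃ z : B, IsUnit (E z) := by
    by_contra hall
    push_neg at hall
    have h4 : (1 : B) ∈ IsLocalRing.maximalIdeal B := by
      rw [← hone]
      exact Ideal.sum_mem _ fun i _ => Ideal.mul_mem_left _ _
        ((IsLocalRing.mem_maximalIdeal _).mpr (hall (Fi i)))
    exact (IsLocalRing.maximalIdeal.isMaximal B).ne_top
      (Ideal.eq_top_of_isUnit_mem _ h4 isUnit_one)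
  obtain ⟨z₀, hz₀⟩ := hexu
  -- the normalization package
  have pack : ∀ (w : Bˣ) (z : B), E z = ↑w →
      ∃ E' : B → B,
        (∀ x y : B, E' (x + y) = E' x + E' y) ∧
        (∀ x y : B, E' (x * y) = x * E' y + E' x * y) ∧
        E' z = 1 ∧
        (∀ f : B, E' f = ↑w⁻¹ * E f) ∧
        (∀ f : B, D f = (a * ↑w) * E' f) ∧
        (∀ f : B, E'^[p] f = 0) := by
    intro w z hwz
    set E' : B → B := fun g => (↑w⁻¹ : B) * E g with hE'
    have hadd' : ∀ x y : B, E' (x + y) = E' x + E' y := by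
      intro x y
      simp only [hE']
      rw [hEadd]
      ring
    have hleib' : ∀ x y : B, E' (x * y) = x * E' y + E' x * y := by
      intro x y
      simp only [hE']
      rw [hEleib]
      ring
    have hy' : E' z = 1 := by
      simp only [hE']
      rw [hwz, Units.inv_mul]
    have hEw : ∀ f : B, E' f = ↑w⁻¹ * E f := fun f => rfl
    have hDE : ∀ f : B, D f = (a * ↑w) * E' f := by
      intro f
      simp only [hE']
      rw [hE f]
      have h5 : (↑w * ↑w⁻¹ : B) = 1 := Units.mul_inv w
      linear_combination (-(a * E f)) * h5
    have hm : (a * ↑w : B) ≠ 0 := mul_ne_zero ha0 (Units.ne_zero w)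
    have hcl' : ∀ f : B, h₂ * (fun x => (a * ↑w) * E' x)^[p] f = h₁ * ((a * ↑w) * E' f) := by
      have hfun : D = fun f => (a * ↑w) * E' f := funext hDE
      intro f
      have hcl2 := hcl f
      rw [hfun] at hcl2
      exact hcl2
    exact ⟨E', hadd', hleib', hy', hEw, hDE,
      core_lemma E' (a * ↑w) hadd' hleib' p hp z hy' hm h₁ h₂ hh₂ hcl'⟩
  constructor
  · -- part 1
    by_cases hZ : ∃ z ∈ IsLocalRing.maximalIdeal B, IsUnit (E z)
    · obtain ⟨z, hzm, hzu⟩ := hZ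
      obtain ⟨E', Hadd, Hleib, Hz1, HEw, HD, HEp⟩ := pack hzu.unit z hzu.unit_spec.symm
      refine ⟨{x | ∃ f ∈ IsLocalRing.maximalIdeal B, x = tay E' z p f}, z, ?_, ?_⟩
      · rintro x ⟨f, hf, rfl⟩
        rw [HD, tay_ker E' z p Hadd Hleib Hz1 hp HEp f, mul_zero]
      · apply le_antisymm
        · rw [Ideal.span_le]
          rintro x (⟨f, hf, rfl⟩ | hx)
          · have hsplit := tay_split E' z p hp f
            have heq : tay E' z p f = f - z * tayq E' z p f := by linear_combination -hsplit
            rw [SetLike.mem_coe, heq]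
            exact sub_mem hf (Ideal.mul_mem_right _ _ hzm)
          · rw [Set.mem_singleton_iff] at hx
            subst hx
            exact hzm
        · intro f hf
          have hsplit := tay_split E' z p hp f
          rw [hsplit]
          apply Ideal.add_mem
          · exact Ideal.subset_span (Or.inl ⟨f, hf, rfl⟩)
          · exact Ideal.mul_mem_right _ _ (Ideal.subset_span (Or.inr rfl))
    · push_neg at hZ
      obtain ⟨E', Hadd, Hleib, Hz1, HEw, HD, HEp⟩ := pack hz₀.unit z₀ hz₀.unit_spec.symm
      have hI : ∀ g ∈ IsLocalRing.maximalIdeal B, E' g ∈ IsLocalRing.maximalIdeal B := by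
        intro g hg
        rw [HEw g]
        exact Ideal.mul_mem_left _ _ ((IsLocalRing.mem_maximalIdeal _).mpr (hZ g hg))
      refine ⟨{x | x ∈ IsLocalRing.maximalIdeal B ∧ E' x = 0}, 0, ?_, ?_⟩
      · rintro x ⟨hxm, hx0⟩
        rw [HD, hx0, mul_zero]
      · apply le_antisymm
        · rw [Ideal.span_le]
          rintro x (⟨hxm, _⟩ | hx)
          · exact hxm
          · rw [Set.mem_singleton_iff] at hx
            subst hx
            exact zero_mem _
        · intro f hf
          have h6 := exp_mem E' z₀ p Hadd Hleib Hz1 hp HEp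
            (IsLocalRing.maximalIdeal B) hI p f (HEp f) hf
          exact Ideal.span_mono Set.subset_union_left h6
  · -- part 2
    intro n t hcard hspan
    by_cases hT : ∃ τ ∈ t, IsUnit (E τ)
    · obtain ⟨τ₀, hτ₀t, hτ₀u⟩ := hT
      have hτ₀m : τ₀ ∈ IsLocalRing.maximalIdeal B := by
        rw [← hspan]
        exact Ideal.subset_span (Finset.mem_coe.mpr hτ₀t)
      obtain ⟨E', Hadd, Hleib, Hz1, HEw, HD, HEp⟩ := pack hτ₀u.unit τ₀ hτ₀u.unit_spec.symm
      set t' := t.erase τ₀ with ht'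
      set L := t'.toList with hLdef
      have hlen : L.length = n - 1 := by
        rw [hLdef, Finset.length_toList, ht', Finset.card_erase_of_mem hτ₀t, hcard]
      refine ⟨fun i => tay E' τ₀ p (L.getD i 0), τ₀, ?_, ?_⟩
      · intro j
        rw [HD, tay_ker E' τ₀ p Hadd Hleib Hz1 hp HEp _, mul_zero]
      · apply le_antisymm
        · rw [Ideal.span_le]
          rintro x (⟨j, rfl⟩ | hx)
          · have hmem : L.getD (↑j) 0 ∈ IsLocalRing.maximalIdeal B := by
              rcases getD_mem_or L (↑j) 0 with h | h
              · have h7 : L.getD (↑j) 0 ∈ t' := Finset.mem_toList.mp h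
                rw [← hspan]
                exact Ideal.subset_span (Finset.mem_coe.mpr (Finset.mem_of_mem_erase h7))
              · rw [h]
                exact zero_mem _
            have hsplit := tay_split E' τ₀ p hp (L.getD (↑j) 0)
            have heq : tay E' τ₀ p (L.getD (↑j) 0)
                = L.getD (↑j) 0 - τ₀ * tayq E' τ₀ p (L.getD (↑j) 0) := by
              linear_combination -hsplit
            rw [SetLike.mem_coe]
            show tay E' τ₀ p (L.getD (↑j) 0) ∈ _
            rw [heq]
            exact sub_mem hmem (Ideal.mul_mem_right _ _ hτ₀m)
          · rw [Set.mem_singleton_iff] at hx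
            subst hx
            exact hτ₀m
        · rw [← hspan, Ideal.span_le]
          intro τ hτ
          rw [SetLike.mem_coe]
          by_cases hττ : τ = τ₀
          · subst hττ
            exact Ideal.subset_span (Or.inr rfl)
          · have hτ' : τ ∈ t' := Finset.mem_erase.mpr ⟨hττ, Finset.mem_coe.mp hτ⟩
            have hτL : τ ∈ L := Finset.mem_toList.mpr hτ'
            obtain ⟨i, hi, hgi⟩ := List.mem_iff_getElem.mp hτL
            have hin : i < n - 1 := by rw [← hlen]; exact hi
            have hxi : (fun i : Fin (n-1) => tay E' τ₀ p (L.getD (↑i) 0)) ⟨i, hin⟩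
                = tay E' τ₀ p τ := by
              show tay E' τ₀ p (L.getD i 0) = _
              rw [List.getD_eq_getElem L 0 hi, hgi]
            have hsplit := tay_split E' τ₀ p hp τ
            rw [hsplit]
            apply Ideal.add_mem
            · exact Ideal.subset_span (Or.inl ⟨⟨i, hin⟩, hxi⟩)
            · exact Ideal.mul_mem_right _ _ (Ideal.subset_span (Or.inr rfl))
    · push_neg at hT
      obtain ⟨E', Hadd, Hleib, Hz1, HEw, HD, HEp⟩ := pack hz₀.unit z₀ hz₀.unit_spec.symm
      have hEm : ∀ g ∈ IsLocalRing.maximalIdeal B, E g ∈ IsLocalRing.maximalIdeal B := by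
        intro g hg
        rw [← hspan] at hg
        refine Submodule.span_induction ?_ ?_ ?_ ?_ hg
        · intro x hx
          exact (IsLocalRing.mem_maximalIdeal _).mpr (hT x (Finset.mem_coe.mp hx))
        · rw [E_zero E hEadd]
          exact zero_mem _
        · intro x y _ _ hx hy
          rw [hEadd]
          exact add_mem hx hy
        · intro r x hxmem hx
          rw [smul_eq_mul, hEleib]
          apply add_mem
          · exact Ideal.mul_mem_left _ _ hx
          · have hxm : x ∈ IsLocalRing.maximalIdeal B := by
              rw [← hspan]
              exact hxmem
            exact Ideal.mul_mem_left _ _ hxm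
      have hI : ∀ g ∈ IsLocalRing.maximalIdeal B, E' g ∈ IsLocalRing.maximalIdeal B := by
        intro g hg
        rw [HEw g]
        exact Ideal.mul_mem_left _ _ (hEm g hg)
      have hs : Ideal.span {x : B | x ∈ IsLocalRing.maximalIdeal B ∧ E' x = 0}
          = IsLocalRing.maximalIdeal B := by
        apply le_antisymm
        · rw [Ideal.span_le]
          rintro x ⟨hxm, _⟩
          exact hxm
        · intro f hf
          exact exp_mem E' z₀ p Hadd Hleib Hz1 hp HEp
            (IsLocalRing.maximalIdeal B) hI p f (HEp f) hf
      obtain ⟨C, hCS, hCcard, hCspan⟩ := exchange _ hs n t ∅ hcard (by simp)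
        (by rw [Finset.union_empty]; exact hspan)
      obtain ⟨x, y, hx, hy, hcov⟩ := pad n C (by simpa using hCcard)
      refine ⟨x, y, ?_, ?_⟩
      · intro j
        rcases hx j with h | h
        · have h8 := hCS h
          rw [HD, h8.2, mul_zero]
        · rw [Set.mem_singleton_iff] at h
          rw [h]
          exact E_zero D hadd
      · apply le_antisymm
        · rw [Ideal.span_le]
          rintro v (hv | hv)
          · obtain ⟨j, rfl⟩ := hv
            rcases hx j with h | h
            · exact (hCS h).1
            · rw [Set.mem_singleton_iff] at h
              rw [h]
              exact zero_mem _
          · rw [Set.mem_singleton_iff] at hv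
            subst hv
            rcases hy with h | h
            · exact (hCS h).1
            · rw [Set.mem_singleton_iff] at h
              rw [h]
              exact zero_mem _
        · rw [← hCspan, Ideal.span_le]
          intro v hv
          rw [SetLike.mem_coe]
          exact Ideal.subset_span (hcov hv)
end

section
/- Let B be a local domain containing a field of characteristic p > 0, and let D : B → B be a nonzero derivation of additive type, i.e., D^p = 0. Assume D is fixed-point-free, i.e., the ideal of B generated by the image of D is the unit ideal. Then there exists x ∈ B with D(x) = 1. -/
open Polynomial Finset

namespace ExistsPreimageOneAux

variable {R : Type*} [CommRing R]

/-! ### Basic facts about bare (unbundled) derivations -/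

lemma fd_zero (δ : R → R) (hadd : ∀ x y : R, δ (x + y) = δ x + δ y) : δ 0 = 0 := by
  have h := hadd 0 0
  rw [add_zero] at h
  exact (right_eq_add.mp h)

lemma fd_one (δ : R → R) (hleib : ∀ x y : R, δ (x * y) = x * δ y + δ x * y) : δ 1 = 0 := by
  have h := hleib 1 1
  rw [mul_one, one_mul, mul_one] at h
  exact (right_eq_add.mp h)

lemma fd_nat (δ : R → R) (hadd : ∀ x y : R, δ (x + y) = δ x + δ y)
    (hleib : ∀ x y : R, δ (x * y) = x * δ y + δ x * y) : ∀ n : ℕ, δ (n : R) = 0 := by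
  intro n
  induction n with
  | zero => simpa using fd_zero δ hadd
  | succ n ih =>
      have h := hadd (n : R) 1
      rw [ih, fd_one δ hleib, add_zero] at h
      rw [Nat.cast_succ]
      exact h

lemma fd_sum (δ : R → R) (hadd : ∀ x y : R, δ (x + y) = δ x + δ y) {ι : Type*} (s : Finset ι)
    (f : ι → R) : δ (∑ i ∈ s, f i) = ∑ i ∈ s, δ (f i) :=
  map_sum (AddMonoidHom.mk' δ hadd) f s

lemma fd_nsmul (δ : R → R) (hadd : ∀ x y : R, δ (x + y) = δ x + δ y) (n : ℕ) (x : R) :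
    δ (n • x) = n • δ x :=
  map_nsmul (AddMonoidHom.mk' δ hadd) n x

lemma fd_iter_nsmul (δ : R → R) (hadd : ∀ x y : R, δ (x + y) = δ x + δ y) (k n : ℕ) (x : R) :
    δ^[k] (n • x) = n • δ^[k] x := by
  induction k generalizing x with
  | zero => simp
  | succ k ih =>
      rw [Function.iterate_succ_apply, fd_nsmul δ hadd, ih, ← Function.iterate_succ_apply]

lemma fd_pow (δ : R → R) (hadd : ∀ x y : R, δ (x + y) = δ x + δ y)
    (hleib : ∀ x y : R, δ (x * y) = x * δ y + δ x * y) {y : R} (hy : δ y = 1) :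
    ∀ k : ℕ, δ (y ^ (k + 1)) = (k + 1) • y ^ k := by
  intro k
  induction k with
  | zero => simpa using hy
  | succ k ih =>
      have h1 : y ^ (k + 1 + 1) = y * y ^ (k + 1) := by ring
      rw [h1, hleib, ih, hy, one_mul, mul_smul_comm]
      have h2 : y * y ^ k = y ^ (k + 1) := by ring
      rw [h2]
      exact (succ_nsmul (y ^ (k + 1)) (k + 1)).symm

lemma fd_iter_pow_self (δ : R → R) (hadd : ∀ x y : R, δ (x + y) = δ x + δ y)
    (hleib : ∀ x y : R, δ (x * y) = x * δ y + δ x * y) {y : R} (hy : δ y = 1) :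
    ∀ i : ℕ, δ^[i] (y ^ i) = (Nat.factorial i) • (1 : R) := by
  intro i
  induction i with
  | zero => simp
  | succ i ih =>
      rw [Function.iterate_succ_apply, fd_pow δ hadd hleib hy, fd_iter_nsmul δ hadd, ih,
        smul_smul, Nat.factorial_succ]

lemma fd_iter_pow_lt (δ : R → R) (hadd : ∀ x y : R, δ (x + y) = δ x + δ y)
    (hleib : ∀ x y : R, δ (x * y) = x * δ y + δ x * y) {y : R} (hy : δ y = 1) :
    ∀ i j : ℕ, i < j → δ^[j] (y ^ i) = 0 := by
  intro i
  induction i with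
  | zero =>
      intro j hj
      obtain ⟨j', rfl⟩ : ∃ j', j = j' + 1 := ⟨j - 1, (Nat.succ_pred_eq_of_pos hj).symm⟩
      rw [Function.iterate_succ_apply, pow_zero, fd_one δ hleib]
      exact Function.iterate_fixed (fd_zero δ hadd) j'
  | succ i ih =>
      intro j hj
      obtain ⟨j', rfl⟩ : ∃ j', j = j' + 1 :=
        ⟨j - 1, (Nat.succ_pred_eq_of_pos (Nat.lt_of_le_of_lt (Nat.zero_le _) hj)).symm⟩
      rw [Function.iterate_succ_apply, fd_pow δ hadd hleib hy, fd_iter_nsmul δ hadd,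
        ih j' (by omega), smul_zero]

/-! ### The coefficientwise map and the extended derivation on `B[X]` -/

variable {B : Type*} [CommRing B]

/-- Apply `D` coefficientwise to a polynomial. -/
noncomputable def cw (D : B → B) (h0 : D 0 = 0) (f : B[X]) : B[X] :=
  ⟨⟨Finsupp.mapRange D h0 f.toFinsupp.coeff⟩⟩

lemma cw_coeff (D : B → B) (h0 : D 0 = 0) (f : B[X]) (n : ℕ) :
    (cw D h0 f).coeff n = D (f.coeff n) := by
  rcases f with ⟨f⟩
  simp only [cw, coeff_ofFinsupp, Finsupp.mapRange_apply]

variable (D : B → B) (h0 : D 0 = 0)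
  (hadd : ∀ x y : B, D (x + y) = D x + D y)
  (hleib : ∀ x y : B, D (x * y) = x * D y + D x * y)

section cwlemmas
include hadd

lemma cw_add (f g : B[X]) : cw D h0 (f + g) = cw D h0 f + cw D h0 g := by
  ext n
  simp [cw_coeff, hadd]

include hleib

lemma cw_mul (f g : B[X]) : cw D h0 (f * g) = f * cw D h0 g + cw D h0 f * g := by
  ext n
  rw [cw_coeff, coeff_add, coeff_mul, coeff_mul, coeff_mul,
    fd_sum D hadd, ← Finset.sum_add_distrib]
  refine Finset.sum_congr rfl ?_
  rintro ⟨i, j⟩ _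
  rw [hleib, cw_coeff, cw_coeff]

lemma cw_derivative (f : B[X]) :
    cw D h0 (derivative f) = derivative (cw D h0 f) := by
  ext n
  rw [cw_coeff, coeff_derivative, coeff_derivative, cw_coeff, hleib]
  have : D ((n : B) + 1) = 0 := by
    have := fd_nat D hadd hleib (n + 1)
    rwa [Nat.cast_succ] at this
  rw [this, mul_zero, zero_add]

end cwlemmas

/-- The extension of `D` to `B[X]` sending `X` to `1`. -/
noncomputable def Dbar (f : B[X]) : B[X] := cw D h0 f + derivative f

section Dbarlemmas
include hadd

lemma Dbar_add (f g : B[X]) : Dbar D h0 (f + g) = Dbar D h0 f + Dbar D h0 g := by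
  simp only [Dbar, cw_add D h0 hadd, derivative_add]
  ring

include hleib

lemma Dbar_mul (f g : B[X]) :
    Dbar D h0 (f * g) = f * Dbar D h0 g + Dbar D h0 f * g := by
  simp only [Dbar, cw_mul D h0 hadd hleib, derivative_mul]
  ring

lemma Dbar_C (b : B) : Dbar D h0 (C b) = C (D b) := by
  have : cw D h0 (C b) = C (D b) := by
    ext n
    rw [cw_coeff, coeff_C, coeff_C]
    split_ifs <;> simp [h0]
  simp [Dbar, this]

lemma Dbar_X : Dbar D h0 (X : B[X]) = 1 := by
  have : cw D h0 (X : B[X]) = 0 := by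
    ext n
    rw [cw_coeff, coeff_X]
    split_ifs <;> simp [h0, fd_one D hleib]
  simp [Dbar, this]

end Dbarlemmas

lemma Dbar_zero : Dbar D h0 (0 : B[X]) = 0 := by
  have hcw : cw D h0 (0 : B[X]) = 0 := by
    ext m
    simp [cw_coeff, h0]
  simp [Dbar, hcw]

/-- iterated derivative is zero in char `p`. -/
lemma derivative_iterate_char (p : ℕ) (hp : p.Prime) [CharP B p] (f : B[X]) :
    derivative^[p] f = 0 := by
  ext n
  rw [coeff_iterate_derivative, coeff_zero]
  obtain ⟨m, hm⟩ : p ∣ (n + p).descFactorial p :=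
    dvd_trans (Nat.dvd_factorial hp.pos le_rfl) (Nat.factorial_dvd_descFactorial _ _)
  rw [hm, mul_smul]
  have : p • (f.coeff (n + p)) = 0 := by
    rw [nsmul_eq_mul, CharP.cast_eq_zero, zero_mul]
  rw [mul_comm] at hm
  rw [smul_comm, this, smul_zero]

section iterp

variable (p : ℕ) (hp : p.Prime) [CharP B p]

include hadd hleib hp in
lemma Dbar_iter_p (hDp : D^[p] = 0) : ∀ f : B[X], (Dbar D h0)^[p] f = 0 := by
  haveI : Fact p.Prime := ⟨hp⟩
  -- work in the endomorphism ring
  set e1 : AddMonoid.End B[X] := AddMonoidHom.mk' (cw D h0) (cw_add D h0 hadd) with he1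
  set e2 : AddMonoid.End B[X] :=
    AddMonoidHom.mk' (fun f => derivative f) (fun f g => derivative_add) with he2
  have hpowapply : ∀ (e : AddMonoid.End B[X]) (n : ℕ) (f : B[X]), (e ^ n) f = (⇑e)^[n] f := by
    intro e n
    induction n with
    | zero => intro f; rfl
    | succ n ih =>
        intro f
        rw [pow_succ, Function.iterate_succ_apply]
        exact ih (e f)
  have hcomm : Commute e1 e2 := by
    apply AddMonoidHom.ext
    intro f
    show e1 (e2 f) = e2 (e1 f)
    exact cw_derivative D h0 hadd hleib f
  haveI : CharP (AddMonoid.End B[X]) p := by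
    constructor
    intro n
    constructor
    · intro h
      have h2 : ((n : AddMonoid.End B[X])) (1 : B[X]) = 0 := by rw [h]; rfl
      rw [AddMonoid.End.natCast_apply, nsmul_eq_mul, mul_one] at h2
      exact (CharP.cast_eq_zero_iff B[X] p n).mp h2
    · intro h
      apply AddMonoidHom.ext
      intro f
      show n • f = (0 : B[X])
      obtain ⟨m, rfl⟩ := h
      have hcast : ((p : ℕ) : B[X]) = 0 := CharP.cast_eq_zero B[X] p
      rw [mul_smul, nsmul_eq_mul, hcast, zero_mul]
  have hkey : (e1 + e2) ^ p = e1 ^ p + e2 ^ p := add_pow_char_of_commute p hcomm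
  intro f
  have hDbar : Dbar D h0 = ⇑(e1 + e2) := by
    funext g
    show Dbar D h0 g = e1 g + e2 g
    rfl
  have hcwiter : ∀ (k : ℕ) (g : B[X]) (n : ℕ), ((cw D h0)^[k] g).coeff n = D^[k] (g.coeff n) := by
    intro k
    induction k with
    | zero => intro g n; rfl
    | succ k ih =>
        intro g n
        rw [Function.iterate_succ_apply, Function.iterate_succ_apply, ih, cw_coeff]
  calc (Dbar D h0)^[p] f = ((e1 + e2) ^ p) f := by rw [hDbar, hpowapply]
    _ = (e1 ^ p) f + (e2 ^ p) f := by rw [hkey]; rfl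
    _ = 0 := by
        rw [hpowapply, hpowapply]
        have h1 : (⇑e1)^[p] f = 0 := by
          ext n
          have : (⇑e1) = cw D h0 := rfl
          rw [this, hcwiter, hDp]
          simp
        have h2 : (⇑e2)^[p] f = 0 := by
          have : (⇑e2) = fun g => derivative g := rfl
          rw [this]
          exact derivative_iterate_char p hp f
        rw [h1, h2, add_zero]

end iterp

/-! ### The twisted derivation `Ebar = C u * Dbar` and the normal form argument -/

section Ebar

variable (u c : B) (hcu : c * u = 1)

/-- `Ebar f = C u * Dbar f`. -/
noncomputable def Ebar (f : B[X]) : B[X] := C u * Dbar D h0 f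

include hadd in
lemma Ebar_add (f g : B[X]) :
    Ebar D h0 u (f + g) = Ebar D h0 u f + Ebar D h0 u g := by
  simp only [Ebar, Dbar_add D h0 hadd]
  ring

include hadd hleib in
lemma Ebar_mul (f g : B[X]) :
    Ebar D h0 u (f * g) = f * Ebar D h0 u g + Ebar D h0 u f * g := by
  simp only [Ebar, Dbar_mul D h0 hadd hleib]
  ring

include hcu in
lemma Dbar_eq_c_mul_Ebar (f : B[X]) : Dbar D h0 f = C c * Ebar D h0 u f := by
  rw [Ebar, ← mul_assoc, ← C_mul, hcu, C_1, one_mul]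

include hadd hleib in
lemma Ebar_C_iter (b : B) (k : ℕ) :
    (Ebar D h0 u)^[k] (C b) = C ((fun x => u * D x)^[k] b) := by
  induction k generalizing b with
  | zero => rfl
  | succ k ih =>
      rw [Function.iterate_succ_apply, Function.iterate_succ_apply]
      have : Ebar D h0 u (C b) = C (u * D b) := by
        rw [Ebar, Dbar_C D h0 hadd hleib, ← C_mul]
      rw [this, ih]

include hadd hleib hcu in
/-- Normal form: `Dbar^[n] = ∑ Q i * Ebar^[i]` with `Q n = (C c)^n`. -/
lemma normal_form : ∀ n : ℕ, 1 ≤ n → ∃ Q : ℕ → B[X],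
    Q 0 = 0 ∧ (∀ i, n < i → Q i = 0) ∧ Q n = (C c) ^ n ∧
    ∀ f : B[X], (Dbar D h0)^[n] f = ∑ i ∈ range (n + 1), Q i * (Ebar D h0 u)^[i] f := by
  intro n
  induction n with
  | zero => omega
  | succ n ih =>
      intro _
      by_cases hn : 1 ≤ n
      · obtain ⟨Q, hQ0, hQgt, hQn, hQsum⟩ := ih hn
        refine ⟨fun i => Dbar D h0 (Q i) + C c * Q (i - 1), ?_, ?_, ?_, ?_⟩
        · show Dbar D h0 (Q 0) + C c * Q (0 - 1) = 0
          have h01 : (0 : ℕ) - 1 = 0 := rfl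
          rw [h01, hQ0, Dbar_zero D h0, mul_zero, add_zero]
        · intro i hi
          show Dbar D h0 (Q i) + C c * Q (i - 1) = 0
          have h1 : Q i = 0 := hQgt i (by omega)
          have h2 : Q (i - 1) = 0 := hQgt (i - 1) (by omega)
          rw [h1, h2, mul_zero, Dbar_zero D h0, add_zero]
        · show Dbar D h0 (Q (n + 1)) + C c * Q (n + 1 - 1) = C c ^ (n + 1)
          have h1 : Q (n + 1) = 0 := hQgt (n + 1) (by omega)
          rw [h1, Dbar_zero D h0, zero_add, Nat.add_sub_cancel, hQn]
          ring
        · intro f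
          rw [Function.iterate_succ_apply', hQsum f,
            fd_sum (Dbar D h0) (Dbar_add D h0 hadd)]
          have hterm : ∀ i, Dbar D h0 (Q i * (Ebar D h0 u)^[i] f)
              = Q i * (C c * (Ebar D h0 u)^[i + 1] f) + Dbar D h0 (Q i) * (Ebar D h0 u)^[i] f := by
            intro i
            rw [Dbar_mul D h0 hadd hleib]
            congr 1
            rw [Dbar_eq_c_mul_Ebar D h0 u c hcu, Function.iterate_succ_apply']
          rw [Finset.sum_congr rfl (fun i _ => hterm i), Finset.sum_add_distrib, add_comm]
          -- now reorganize the target sum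
          have htgt : ∑ i ∈ range (n + 2), (Dbar D h0 (Q i) + C c * Q (i - 1)) * (Ebar D h0 u)^[i] f
              = ∑ i ∈ range (n + 2), Dbar D h0 (Q i) * (Ebar D h0 u)^[i] f
                + ∑ i ∈ range (n + 2), (C c * Q (i - 1)) * (Ebar D h0 u)^[i] f := by
            rw [← Finset.sum_add_distrib]
            exact Finset.sum_congr rfl (fun i _ => by ring)
          rw [htgt]
          congr 1
          · -- first sums match after dropping the top term
            rw [Finset.sum_range_succ (fun i => Dbar D h0 (Q i) * (Ebar D h0 u)^[i] f) (n + 1)]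
            have h1 : Q (n + 1) = 0 := hQgt (n + 1) (by omega)
            rw [h1, Dbar_zero D h0, zero_mul, add_zero]
          · -- second sums match after index shift
            rw [Finset.sum_range_succ' (fun i => (C c * Q (i - 1)) * (Ebar D h0 u)^[i] f) (n + 1)]
            simp only [Nat.add_sub_cancel]
            have h3 : (C c * Q (0 - 1)) * (Ebar D h0 u)^[0] f = 0 := by
              simp [hQ0]
            rw [h3, add_zero]
            refine (Finset.sum_congr rfl (fun i _ => by ring)).symm
      · -- n = 0 case : base case n + 1 = 1
        have hn0 : n = 0 := by omega
        subst hn0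
        refine ⟨fun i => if i = 1 then C c else 0, by simp, ?_, by simp, ?_⟩
        · intro i hi
          simp [show i ≠ 1 by omega]
        · intro f
          rw [Function.iterate_one]
          rw [show range (1 + 1) = {0, 1} by rfl]
          rw [Finset.sum_insert (by simp), Finset.sum_singleton]
          simp only [if_pos rfl, if_neg one_ne_zero]
          rw [Function.iterate_one, Dbar_eq_c_mul_Ebar D h0 u c hcu]
          simp

end Ebar

end ExistsPreimageOneAux

open ExistsPreimageOneAux

/-- Let `B` be a local domain containing a field of characteristic `p > 0`, and let
`D : B → B` be a nonzero derivation of additive type (`D^p = 0`) that is fixed-point-free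
(the ideal generated by the image of `D` is the unit ideal).  Then there exists `x ∈ B`
with `D x = 1`. -/
theorem exists_preimage_one_of_additive_fixedPointFree {B F : Type*} [CommRing B]
    [IsDomain B] [IsLocalRing B] [Field F] [Algebra F B] (p : ℕ) (hp : p.Prime) [CharP F p]
    (D : B → B) (hadd : ∀ x y : B, D (x + y) = D x + D y)
    (hleib : ∀ x y : B, D (x * y) = x * D y + D x * y)
    (hD : D ≠ 0) (hadditive : D^[p] = 0)
    (hfree : Ideal.span (Set.range D) = ⊤) :
    ∃ x : B, D x = 1 := by
  haveI : Fact p.Prime := ⟨hp⟩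
  haveI : CharP B p := charP_of_injective_algebraMap (algebraMap F B).injective p
  -- Step 1: find `a` with `D a` a unit
  have hexa : ∃ a : B, IsUnit (D a) := by
    by_contra h
    push_neg at h
    have hle : Ideal.span (Set.range D) ≤ IsLocalRing.maximalIdeal B := by
      rw [Ideal.span_le]
      rintro _ ⟨y, rfl⟩
      exact h y
    rw [hfree] at hle
    exact (IsLocalRing.maximalIdeal.isMaximal B).ne_top (top_le_iff.mp hle)
  obtain ⟨a, ha⟩ := hexa
  obtain ⟨cu, hc⟩ := ha
  set c : B := (cu : B) with hcdef
  set u : B := ((cu⁻¹ : Bˣ) : B) with hudef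
  have hcu : c * u = 1 := by rw [hcdef, hudef, ← Units.val_mul, mul_inv_cancel, Units.val_one]
  have hne_u : u ≠ 0 := Units.ne_zero _
  have h0 : D 0 = 0 := fd_zero D hadd
  set E : B → B := fun x => u * D x with hEdef
  have hEa : E a = 1 := by
    show u * D a = 1
    rw [← hc, mul_comm]
    exact hcu
  have hEadd : ∀ x y : B, E (x + y) = E x + E y := by
    intro x y
    show u * D (x + y) = u * D x + u * D y
    rw [hadd, mul_add]
  have hEleib : ∀ x y : B, E (x * y) = x * E y + E x * y := by
    intro x y
    show u * D (x * y) = x * (u * D y) + (u * D x) * y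
    rw [hleib]
    ring
  -- Step 2: polynomial layer, proving `E^[p-1] u = 0`
  have hDbarp : ∀ f : B[X], (Dbar D h0)^[p] f = 0 :=
    Dbar_iter_p D h0 hadd hleib p hp hadditive
  obtain ⟨Q, hQ0, hQgt, hQp, hQsum⟩ :=
    normal_form D h0 hadd hleib u c hcu p hp.one_lt.le
  have hEbadd : ∀ f g : B[X], Ebar D h0 u (f + g) = Ebar D h0 u f + Ebar D h0 u g :=
    fun f g => Ebar_add D h0 hadd u f g
  have hEbmul : ∀ f g : B[X],
      Ebar D h0 u (f * g) = f * Ebar D h0 u g + Ebar D h0 u f * g :=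
    fun f g => Ebar_mul D h0 hadd hleib u f g
  have hEbarA : Ebar D h0 u (C a) = 1 := by
    have h1 := Ebar_C_iter D h0 hadd hleib u a 1
    rw [Function.iterate_one, Function.iterate_one] at h1
    rw [h1]
    show C (E a) = 1
    rw [hEa, C_1]
  have hfacB : ∀ i : ℕ, i < p → ((Nat.factorial i : ℕ) : B[X]) ≠ 0 := by
    intro i hi h
    rw [← Polynomial.C_eq_natCast, C_eq_zero] at h
    rw [CharP.cast_eq_zero_iff B p] at h
    have := (Nat.Prime.dvd_factorial hp).mp h
    omega
  have hkill : ∀ i : ℕ, 1 ≤ i → i < p → Q i = 0 := by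
    intro i
    induction i using Nat.strong_induction_on with
    | _ i IH =>
      intro hi1 hip
      have h := hQsum ((C a) ^ i)
      rw [hDbarp] at h
      have hsingle : ∑ j ∈ range (p + 1), Q j * (Ebar D h0 u)^[j] ((C a) ^ i)
          = Q i * ((Nat.factorial i) • (1 : B[X])) := by
        rw [Finset.sum_eq_single i]
        · rw [fd_iter_pow_self (Ebar D h0 u) hEbadd hEbmul hEbarA i]
        · intro j _ hji
          rcases Nat.lt_or_ge j i with hlt | hge
          · rcases Nat.eq_zero_or_pos j with hj0 | hj1
            · rw [hj0, hQ0, zero_mul]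
            · rw [IH j hlt hj1 (lt_trans hlt hip), zero_mul]
          · have hgt : i < j := by omega
            rw [fd_iter_pow_lt (Ebar D h0 u) hEbadd hEbmul hEbarA i j hgt, mul_zero]
        · intro hnot
          exact absurd (mem_range.mpr (Nat.lt_succ_of_lt hip)) hnot
      rw [hsingle] at h
      rw [nsmul_eq_mul, mul_one] at h
      rcases mul_eq_zero.mp h.symm with h' | h'
      · exact h'
      · exact absurd h' (hfacB i hip)
  have hEbarp : ∀ f : B[X], (Ebar D h0 u)^[p] f = 0 := by
    intro f
    have h := hQsum f
    rw [hDbarp] at h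
    have hsingle : ∑ j ∈ range (p + 1), Q j * (Ebar D h0 u)^[j] f
        = (C c) ^ p * (Ebar D h0 u)^[p] f := by
      rw [Finset.sum_eq_single p]
      · rw [hQp]
      · intro j hjmem hjp
        have hjlt : j < p + 1 := mem_range.mp hjmem
        rcases Nat.eq_zero_or_pos j with hj0 | hj1
        · rw [hj0, hQ0, zero_mul]
        · rw [hkill j hj1 (by omega), zero_mul]
      · intro hnot
        exact absurd (mem_range.mpr (Nat.lt_succ_self p)) hnot
    rw [hsingle] at h
    rcases mul_eq_zero.mp h.symm with h' | h'
    · exact absurd h' (pow_ne_zero p (by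
        rw [Ne, C_eq_zero]
        exact cu.ne_zero))
    · exact h'
  have hEiter : E^[p - 1] u = 0 := by
    have h := hEbarp X
    have hps : p - 1 + 1 = p := Nat.succ_pred_eq_of_pos hp.pos
    rw [← hps, Function.iterate_succ_apply] at h
    have hX : Ebar D h0 u X = C u := by
      rw [Ebar, Dbar_X D h0 hadd hleib, mul_one]
    rw [hX, Ebar_C_iter D h0 hadd hleib u u (p - 1)] at h
    rw [C_eq_zero] at h
    exact h
  -- Step 3: telescoping antiderivative
  set χ : ZMod p →+* B := ZMod.castHom dvd_rfl B with hχdef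
  have hDχ : ∀ s : ZMod p, D (χ s) = 0 := by
    intro s
    obtain ⟨k, rfl⟩ := ZMod.natCast_zmod_surjective s
    rw [map_natCast]
    exact fd_nat D hadd hleib k
  have hEχmul : ∀ (s : ZMod p) (y : B), E (χ s * y) = χ s * E y := by
    intro s y
    show u * D (χ s * y) = χ s * (u * D y)
    rw [hleib, hDχ, zero_mul, add_zero]
    ring
  have hfacZ : ∀ k : ℕ, k < p → ((Nat.factorial k : ℕ) : ZMod p) ≠ 0 := by
    intro k hk h
    rw [ZMod.natCast_eq_zero_iff] at h
    have := (Nat.Prime.dvd_factorial hp).mp h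
    omega
  set ν : ℕ → ZMod p := fun k => (-1) ^ k / ((Nat.factorial k : ℕ) : ZMod p) with hνdef
  set w : ℕ → B := fun k => E^[k] u with hwdef
  have hw0 : w 0 = u := rfl
  have hwsucc : ∀ k, E (w k) = w (k + 1) := by
    intro k
    rw [hwdef]
    exact (Function.iterate_succ_apply' E k u).symm
  set g : ℕ → B := fun k => χ (ν k) * (a ^ k * w k) with hgdef
  set x : B := ∑ k ∈ range (p - 1), χ (-ν (k + 1)) * (a ^ (k + 1) * w k) with hxdef
  have hEx : E x = u := by
    rw [hxdef, fd_sum E hEadd]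
    have hterm : ∀ k ∈ range (p - 1),
        E (χ (-ν (k + 1)) * (a ^ (k + 1) * w k)) = g k - g (k + 1) := by
      intro k hk
      have hk1 : k + 1 < p := by
        have := mem_range.mp hk
        omega
      rw [hEχmul]
      have hE2 : E (a ^ (k + 1) * w k) = a ^ (k + 1) * w (k + 1) + ((k + 1) • a ^ k) * w k := by
        rw [hEleib, hwsucc, fd_pow E hEadd hEleib hEa k]
      rw [hE2, mul_add]
      have hfirst : χ (-ν (k + 1)) * (a ^ (k + 1) * w (k + 1)) = -g (k + 1) := by
        rw [map_neg, neg_mul, hgdef]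
      have hsecond : χ (-ν (k + 1)) * (((k + 1) • a ^ k) * w k) = g k := by
        have h1 : ((k + 1) • a ^ k) * w k = ((k + 1 : ℕ) : B) * (a ^ k * w k) := by
          rw [nsmul_eq_mul]
          ring
        rw [h1, ← map_natCast χ (k + 1 : ℕ), ← mul_assoc, ← map_mul, hgdef]
        have harith : -ν (k + 1) * ((k + 1 : ℕ) : ZMod p) = ν k := by
          have hfk : ((Nat.factorial k : ℕ) : ZMod p) ≠ 0 := hfacZ k (by omega)
          have hfk1 : ((k + 1 : ℕ) : ZMod p) ≠ 0 := by
            rw [Ne, ZMod.natCast_eq_zero_iff]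
            intro hdvd
            have := Nat.le_of_dvd (by omega) hdvd
            omega
          have hfact : ((Nat.factorial (k + 1) : ℕ) : ZMod p)
              = ((k + 1 : ℕ) : ZMod p) * ((Nat.factorial k : ℕ) : ZMod p) := by
            rw [Nat.factorial_succ]
            push_cast
            ring
          have hν1 : ν (k + 1) = (-1) ^ (k + 1)
              * (((k + 1 : ℕ) : ZMod p)⁻¹ * ((Nat.factorial k : ℕ) : ZMod p)⁻¹) := by
            show (-1) ^ (k + 1) / ((Nat.factorial (k + 1) : ℕ) : ZMod p) = _
            rw [div_eq_mul_inv, hfact, mul_inv]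
          have hν0 : ν k = (-1) ^ k * ((Nat.factorial k : ℕ) : ZMod p)⁻¹ := by
            show (-1) ^ k / ((Nat.factorial k : ℕ) : ZMod p) = _
            rw [div_eq_mul_inv]
          have hcancel : (((k + 1 : ℕ) : ZMod p))⁻¹ * ((k + 1 : ℕ) : ZMod p) = 1 :=
            inv_mul_cancel₀ hfk1
          rw [hν1, hν0]
          linear_combination ((-1 : ZMod p) ^ k * ((Nat.factorial k : ℕ) : ZMod p)⁻¹) * hcancel
        rw [harith]
      rw [hfirst, hsecond]
      ring
    rw [Finset.sum_congr rfl hterm, Finset.sum_range_sub' g (p - 1)]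
    have hg0 : g 0 = u := by
      rw [hgdef]
      simp only [pow_zero, one_mul, hw0]
      have : ν 0 = 1 := by
        rw [hνdef]
        simp [Nat.factorial_zero]
      rw [this, map_one, one_mul]
    have hgp : g (p - 1) = 0 := by
      rw [hgdef]
      simp only []
      rw [show w (p - 1) = 0 from hEiter, mul_zero, mul_zero]
    rw [hg0, hgp, sub_zero]
  refine ⟨x, ?_⟩
  have : u * D x = u * 1 := by
    rw [mul_one]
    exact hEx
  exact mul_left_cancel₀ hne_u this
end

section
/- Let k be an algebraically closed field of characteristic p > 0 and B = k[[x,y]]. Let D be a nonzero k-linear derivation of B of additive type, i.e., D^p = 0, and assume the ideal (D(x), D(y)) is a proper ideal of finite colength (equivalently, the fixed locus of D is supported exactly at the closed point). Then dim_k B/(D(x), D(y)) ≥ 2. -/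
open MvPowerSeries Finsupp in
private theorem coeff_single_mul_aux {k : Type*} [Field k] {σ : Type*} [DecidableEq σ]
    (i : σ) (a b : MvPowerSeries σ k) :
    MvPowerSeries.coeff (single i 1) (a * b) =
      constantCoeff a * MvPowerSeries.coeff (single i 1) b +
      MvPowerSeries.coeff (single i 1) a * constantCoeff b := by
  rw [MvPowerSeries.coeff_mul]
  have hne : ((0 : σ →₀ ℕ), single i 1) ≠ (single i 1, 0) := by
    simp [Prod.ext_iff, eq_comm, Finsupp.single_eq_zero]
  simp [Finsupp.antidiagonal_single, Finset.Nat.antidiagonal_succ, Prod.map,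
    Finset.sum_pair hne, MvPowerSeries.coeff_zero_eq_constantCoeff]

open MvPowerSeries Finsupp in
private theorem mem_span_X_aux {k : Type*} [Field k] (f : MvPowerSeries (Fin 2) k)
    (hf : constantCoeff f = 0) :
    f ∈ Ideal.span {(X 0 : MvPowerSeries (Fin 2) k), X 1} := by
  classical
  have hf0 : f 0 = 0 := hf
  set g : MvPowerSeries (Fin 2) k := fun d => f (d + single 0 1) with hg
  set h : MvPowerSeries (Fin 2) k := fun d => if d 0 = 0 then f (d + single 1 1) else 0 with hh
  have key : f = X 0 * g + X 1 * h := by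
    ext d
    rw [map_add, X_def, X_def, coeff_monomial_mul, coeff_monomial_mul]
    simp only [MvPowerSeries.coeff_apply, one_mul]; simp only [hg, hh]
    have e1sub : (d - (single 1 1 : Fin 2 →₀ ℕ)) 0 = d 0 := by
      simp [Finsupp.tsub_apply, Finsupp.single_apply]
    by_cases H0 : (single 0 1 : Fin 2 →₀ ℕ) ≤ d
    · have hd0 : 1 ≤ d 0 := Finsupp.single_le_iff.1 H0
      rw [if_pos H0, tsub_add_cancel_of_le H0]
      by_cases H1 : (single 1 1 : Fin 2 →₀ ℕ) ≤ d
      · rw [if_pos H1, e1sub, if_neg (by omega)]; ring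
      · rw [if_neg H1]; ring
    · have hd0 : d 0 = 0 := by
        by_contra hc
        exact H0 (Finsupp.single_le_iff.2 (by omega))
      rw [if_neg H0]
      by_cases H1 : (single 1 1 : Fin 2 →₀ ℕ) ≤ d
      · rw [if_pos H1, e1sub, if_pos hd0, tsub_add_cancel_of_le H1]; ring
      · have hd1 : d 1 = 0 := by
          by_contra hc
          exact H1 (Finsupp.single_le_iff.2 (by omega))
        have hd : d = 0 := by
          ext j; fin_cases j <;> simpa [hd0]
        rw [if_neg H1]
        simp [hd, hf0]
  rw [key]
  exact add_mem (Ideal.mul_mem_right _ _ (Ideal.subset_span (by simp)))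
    (Ideal.mul_mem_right _ _ (Ideal.subset_span (by simp)))

open MvPowerSeries Finsupp in
private theorem main_aux {k : Type*} [Field k] (p : ℕ) (hp : p.Prime)
    (D : Derivation k (MvPowerSeries (Fin 2) k) (MvPowerSeries (Fin 2) k))
    (hadditive : ∀ f, (⇑D)^[p] f = 0)
    (hIeqm : Ideal.span {D (MvPowerSeries.X 0), D (MvPowerSeries.X 1)} =
      Ideal.span {(X 0 : MvPowerSeries (Fin 2) k), X 1}) : False := by
  classical
  set B := MvPowerSeries (Fin 2) k
  set m : Ideal B := Ideal.span {(X 0 : B), X 1} with hm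
  set I : Ideal B := Ideal.span {D (MvPowerSeries.X 0), D (MvPowerSeries.X 1)} with hI
  set cst := (constantCoeff : B →+* k)
  set φ : Fin 2 → B → k := fun i f => MvPowerSeries.coeff (single i 1) f with hφ
  -- constant coefficient vanishes on m
  have hcst_m : ∀ f ∈ m, cst f = 0 := by
    intro f hf
    have : m ≤ RingHom.ker (cst : B →+* k) := by
      rw [hm, Ideal.span_le]
      intro z hz
      rw [SetLike.mem_coe, RingHom.mem_ker]
      rcases hz with h | h <;> subst h <;> exact MvPowerSeries.constantCoeff_X _
    simpa [RingHom.mem_ker] using this hf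
  have hDx : D (MvPowerSeries.X 0) ∈ m := hIeqm ▸ Ideal.subset_span (by simp)
  have hDy : D (MvPowerSeries.X 1) ∈ m := hIeqm ▸ Ideal.subset_span (by simp)
  -- D maps everything into m
  have hDC : ∀ r : k, D ((MvPowerSeries.C : k →+* B) r) = 0 := by
    intro r
    rw [MvPowerSeries.c_eq_algebraMap]
    exact Derivation.map_algebraMap D r
  have hDsub : ∀ f : B, D f = D (f - (MvPowerSeries.C : k →+* B) (cst f)) := by
    intro f; rw [map_sub, hDC, sub_zero]
  have hsub_m : ∀ f : B, f - (MvPowerSeries.C : k →+* B) (cst f) ∈ m := by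
    intro f
    exact mem_span_X_aux _ (by simp [cst])
  have hDm : ∀ f : B, D f ∈ m := by
    intro f
    rw [hDsub f]
    obtain ⟨a, b, hab⟩ := Ideal.mem_span_pair.1 (hsub_m f)
    rw [← hab, map_add, Derivation.leibniz, Derivation.leibniz, smul_eq_mul, smul_eq_mul,
      smul_eq_mul, smul_eq_mul]
    refine add_mem (add_mem (Ideal.mul_mem_left _ _ hDx) ?_)
      (add_mem (Ideal.mul_mem_left _ _ hDy) ?_)
    · exact Ideal.mul_mem_right _ _ (Ideal.subset_span (by simp))
    · exact Ideal.mul_mem_right _ _ (Ideal.subset_span (by simp))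
  -- the linearization matrix
  set M : Matrix (Fin 2) (Fin 2) k := fun j i => φ i (D (MvPowerSeries.X j)) with hM
  -- φ of X's
  have hφX : ∀ i j : Fin 2, φ i (MvPowerSeries.X j) = if i = j then 1 else 0 := by
    intro i j
    rw [hφ]
    simp only [MvPowerSeries.coeff_X]
    by_cases h : i = j
    · simp [h]
    · rw [if_neg (fun hc => h ((Finsupp.single_left_inj one_ne_zero).1 hc)), if_neg h]
  -- linear part of the action of D
  have hlin : ∀ (f : B) (i : Fin 2),
      φ i (D f) = φ 0 f * M 0 i + φ 1 f * M 1 i := by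
    intro f i
    obtain ⟨a, b, hab⟩ := Ideal.mem_span_pair.1 (hsub_m f)
    have h1 : cst (D (MvPowerSeries.X 0)) = 0 := hcst_m _ hDx
    have h2 : cst (D (MvPowerSeries.X 1)) = 0 := hcst_m _ hDy
    have h3 : cst (D a) = 0 := hcst_m _ (hDm a)
    have h4 : cst (D b) = 0 := hcst_m _ (hDm b)
    have hφf : ∀ l : Fin 2, φ l f = cst a * φ l (MvPowerSeries.X 0) +
        cst b * φ l (MvPowerSeries.X 1) := by
      intro l
      have hC : φ l f = φ l (f - (MvPowerSeries.C : k →+* B) (cst f)) := by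
        simp only [hφ]
        simp [map_sub, MvPowerSeries.coeff_C, Finsupp.single_eq_zero]
      rw [hC, ← hab]
      simp only [hφ, map_add]
      rw [coeff_single_mul_aux, coeff_single_mul_aux]
      simp [MvPowerSeries.constantCoeff_X, cst]
    have hDf : φ i (D f) = cst a * M 0 i + cst b * M 1 i := by
      rw [hDsub f, ← hab, map_add, Derivation.leibniz, Derivation.leibniz,
        smul_eq_mul, smul_eq_mul, smul_eq_mul, smul_eq_mul]
      simp only [hφ, map_add]
      rw [coeff_single_mul_aux, coeff_single_mul_aux, coeff_single_mul_aux, coeff_single_mul_aux]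
      simp only [hM, hφ]
      simp only [cst] at h1 h2 h3 h4
      simp [h1, h2, h3, h4, MvPowerSeries.constantCoeff_X, cst]
    rw [hDf, hφf 0, hφf 1]
    rw [hφX, hφX, hφX, hφX]
    norm_num
  -- the row-vector of linear coefficients
  set v : B → Fin 2 → k := fun f i => φ i f with hv
  have hvec : ∀ f : B, v (D f) = Matrix.vecMul (v f) M := by
    intro f
    funext i
    simp only [hv, Matrix.vecMul, dotProduct, Fin.sum_univ_two]
    exact hlin f i
  have hiter : ∀ (n : ℕ) (f : B), v ((⇑D)^[n] f) = Matrix.vecMul (v f) (M ^ n) := by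
    intro n
    induction n with
    | zero => intro f; simp
    | succ n ih =>
      intro f
      rw [Function.iterate_succ_apply, ih (D f), hvec f, Matrix.vecMul_vecMul, ← pow_succ']
  -- M^p = 0
  have hMp : M ^ p = 0 := by
    ext j i
    have h := congrFun (hiter p (MvPowerSeries.X j)) i
    rw [hadditive] at h
    have hvX : v (MvPowerSeries.X j) = fun l => if l = j then 1 else 0 := by
      funext l; exact hφX l j
    rw [hvX] at h
    have h0 : (0 : k) = Matrix.vecMul (fun l => if l = j then (1:k) else 0) (M ^ p) i := by
      simpa [hv, hφ] using h
    have h1 : Matrix.vecMul (fun l => if l = j then (1:k) else 0) (M ^ p) i = (M ^ p) j i := by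
      simp only [Matrix.vecMul, dotProduct, Fin.sum_univ_two]
      fin_cases j <;> simp
    rw [Matrix.zero_apply, ← h1, ← h0]
  have hdet : M.det = 0 := by
    have : M.det ^ p = 0 := by
      rw [← Matrix.det_pow, hMp, Matrix.det_zero]
    exact pow_eq_zero_iff hp.ne_zero |>.1 this
  -- now invertibility of M from I = m
  have hX0I : (MvPowerSeries.X 0 : B) ∈ I := by
    rw [hIeqm]; exact Ideal.subset_span (by simp)
  have hX1I : (MvPowerSeries.X 1 : B) ∈ I := by
    rw [hIeqm]; exact Ideal.subset_span (by simp)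
  obtain ⟨a0, b0, hab0⟩ := Ideal.mem_span_pair.1 hX0I
  obtain ⟨a1, b1, hab1⟩ := Ideal.mem_span_pair.1 hX1I
  set N : Matrix (Fin 2) (Fin 2) k :=
    Matrix.of ![![cst a0, cst b0], ![cst a1, cst b1]] with hN
  have hNM : N * M = 1 := by
    ext r i
    rw [Matrix.mul_apply, Fin.sum_univ_two]
    have key : ∀ (a b : B) (j : Fin 2),
        a * D (MvPowerSeries.X 0) + b * D (MvPowerSeries.X 1) = MvPowerSeries.X j →
        cst a * M 0 i + cst b * M 1 i = if j = i then 1 else 0 := by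
      intro a b j hj
      have h1 : cst (D (MvPowerSeries.X 0)) = 0 := hcst_m _ hDx
      have h2 : cst (D (MvPowerSeries.X 1)) = 0 := hcst_m _ hDy
      have := congrArg (φ i) hj
      rw [hφX i j] at this
      simp only [hφ, map_add] at this
      rw [coeff_single_mul_aux, coeff_single_mul_aux] at this
      simp only [cst] at h1 h2 ⊢
      rw [h1, h2, mul_zero, mul_zero, add_zero, add_zero] at this
      simp only [hM, hφ]
      rw [this]
      by_cases hji : j = i
      · simp [hji]
      · have hij : ¬ i = j := fun hc => hji hc.symm
        simp [hji, hij]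
    fin_cases r
    · have := key a0 b0 0 hab0
      simpa [hN, Matrix.one_apply, eq_comm] using this
    · have := key a1 b1 1 hab1
      simpa [hN, Matrix.one_apply, eq_comm] using this
  have : (1 : k) = 0 := by
    have hdetNM : N.det * M.det = 1 := by
      rw [← Matrix.det_mul, hNM, Matrix.det_one]
    rw [hdet, mul_zero] at hdetNM
    exact hdetNM.symm
  exact absurd this one_ne_zero

/-- Let `k` be an algebraically closed field of characteristic `p > 0` and `B = k[[x,y]]`.
If `D` is a nonzero `k`-derivation of `B` of additive type (`D^p = 0`) whose fixed ideal
`(D x, D y)` is a proper ideal of finite colength, then `dim_k B/(D x, D y) ≥ 2`. -/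
theorem additive_type_colength_ge_two {k : Type*} [Field k] [IsAlgClosed k]
    (p : ℕ) (hp : p.Prime) [CharP k p]
    (D : Derivation k (MvPowerSeries (Fin 2) k) (MvPowerSeries (Fin 2) k))
    (hD : D ≠ 0) (hadditive : ∀ f, (⇑D)^[p] f = 0)
    (hproper : Ideal.span {D (MvPowerSeries.X 0), D (MvPowerSeries.X 1)} ≠ ⊤)
    (hfin : FiniteDimensional k
      (MvPowerSeries (Fin 2) k ⧸
        Ideal.span {D (MvPowerSeries.X 0), D (MvPowerSeries.X 1)})) :
    2 ≤ Module.finrank k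
      (MvPowerSeries (Fin 2) k ⧸
        Ideal.span {D (MvPowerSeries.X 0), D (MvPowerSeries.X 1)}) := by
  classical
  by_contra hlt
  push_neg at hlt
  set B := MvPowerSeries (Fin 2) k
  set I : Ideal B := Ideal.span {D (MvPowerSeries.X 0), D (MvPowerSeries.X 1)} with hI
  set m : Ideal B := Ideal.span {(MvPowerSeries.X 0 : B), MvPowerSeries.X 1} with hm
  have hnt : Nontrivial (B ⧸ I) := Ideal.Quotient.nontrivial_iff.mpr hproper
  have hpos : 0 < Module.finrank k (B ⧸ I) := Module.finrank_pos
  have hone : Module.finrank k (B ⧸ I) = 1 := le_antisymm (Nat.lt_succ_iff.mp hlt) hpos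
  have hone_ne : (1 : B ⧸ I) ≠ 0 := one_ne_zero
  have hsurj : ∀ w : B ⧸ I, ∃ c : k, c • (1 : B ⧸ I) = w :=
    (finrank_eq_one_iff_of_nonzero' (1 : B ⧸ I) hone_ne).1 hone
  have hfield : IsField (B ⧸ I) := by
    refine ⟨exists_pair_ne _, mul_comm, ?_⟩
    intro a ha
    obtain ⟨c, hc⟩ := hsurj a
    have hcne : c ≠ 0 := by
      rintro rfl
      rw [zero_smul] at hc
      exact ha hc.symm
    refine ⟨c⁻¹ • 1, ?_⟩
    rw [← hc, smul_mul_assoc, one_mul, smul_smul, mul_inv_cancel₀ hcne, one_smul]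
  have hImax : I.IsMaximal := Ideal.Quotient.maximal_of_isField I hfield
  -- m is proper
  have hcst_m : ∀ f ∈ m, (MvPowerSeries.constantCoeff : B →+* k) f = 0 := by
    intro f hf
    have hle : m ≤ RingHom.ker ((MvPowerSeries.constantCoeff : B →+* k)) := by
      rw [hm, Ideal.span_le]
      intro z hz
      rw [SetLike.mem_coe, RingHom.mem_ker]
      rcases hz with h | h <;> subst h <;> exact MvPowerSeries.constantCoeff_X _
    simpa [RingHom.mem_ker] using hle hf
  have hmtop : m ≠ ⊤ := by
    intro h
    have h1 : (1 : B) ∈ m := h ▸ Submodule.mem_top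
    have := hcst_m 1 h1
    simp at this
  -- I ≤ m
  have hIlem : I ≤ m := by
    rw [hI, Ideal.span_le]
    intro z hz
    have hzI : z ∈ I := Ideal.subset_span hz
    have hznu : ¬ IsUnit z := fun hu => hproper (Ideal.eq_top_of_isUnit_mem I hzI hu)
    have hzc : (MvPowerSeries.constantCoeff : B →+* k) z = 0 := by
      by_contra hc
      exact hznu (MvPowerSeries.isUnit_iff_constantCoeff.2 (isUnit_iff_ne_zero.2 hc))
    exact mem_span_X_aux z hzc
  have hIeqm : I = m := hImax.eq_of_le hmtop hIlem
  exact main_aux p hp D hadditive (hI ▸ hIeqm)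
end
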